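/- arXiv:2204.05099 — 4 statements merged into one kernel-verified Lean document; each statement's English description precedes it below -/
import Mathlib

section
/- Let K : ℝ^k \ {0} → ℂ satisfy the cancellation condition ∫_{Ω_R \ Ω_r} K(y) dy = 0 for all 0 < r < R, and the size condition |K(x)| ≤ |x|^{-k}. Let Γ ⊆ ℕ₀^k \ {0} be finite and define Ψ_t(ξ) := p.v. ∫_{Ω_t} e^{2πi ξ·(y)^Γ} K(y) dy for ξ ∈ ℝ^Γ. Then for every fixed c ∈ (0,1), every t > 0 and every ξ, |Ψ_t(ξ) − Ψ_{ct}(ξ)| ≤ C |t^A ξ|_∞, where C depends only on k, |Γ|, c, and t^A ξ := (t^{|γ|} ξ_γ : γ ∈ Γ) with |γ| = γ_1 + ... + γ_k, and |·|_∞ the sup norm. -/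
open MeasureTheory Filter Topology Classical

noncomputable section

open Metric Real
open scoped ENNReal NNReal




lemma norm_exp_mul_I_sub_one_le (θ : ℝ) : ‖Complex.exp ((θ:ℂ) * Complex.I) - 1‖ ≤ |θ| := by
  have hab : Complex.exp ((θ/2:ℝ) * Complex.I) * Complex.exp (-(((θ/2:ℝ):ℂ) * Complex.I)) = 1 := by
    rw [← Complex.exp_add]; simp
  have h1 : Complex.exp ((θ:ℂ) * Complex.I) - 1 =
      Complex.exp ((θ/2 : ℝ) * Complex.I) * (2 * Complex.I * Complex.sin ((θ/2 : ℝ) : ℂ)) := by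
    rw [Complex.sin]
    rw [show ((θ:ℂ) * Complex.I) = ((θ/2:ℝ):ℂ) * Complex.I + ((θ/2:ℝ):ℂ) * Complex.I by
      push_cast; ring]
    rw [Complex.exp_add]
    rw [show (-(((θ/2:ℝ):ℂ)) * Complex.I) = (-(((θ/2:ℝ):ℂ) * Complex.I)) by ring]
    linear_combination hab - (Complex.exp (((θ/2:ℝ):ℂ) * Complex.I) *
      (Complex.exp (-(((θ/2:ℝ):ℂ) * Complex.I)) - Complex.exp (((θ/2:ℝ):ℂ) * Complex.I))) *
        Complex.I_sq
  rw [h1, norm_mul]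
  have h2 : ‖Complex.exp ((θ/2 : ℝ) * Complex.I)‖ = 1 := by
    simpa using Complex.norm_exp_ofReal_mul_I (θ/2)
  rw [h2, one_mul, show Complex.sin ((θ/2:ℝ):ℂ) = ((Real.sin (θ/2) : ℝ) : ℂ) from
    (Complex.ofReal_sin _).symm]
  have h5 : ‖(2 : ℂ) * Complex.I * ((Real.sin (θ/2) : ℝ) : ℂ)‖ = 2 * |Real.sin (θ/2)| := by
    rw [norm_mul, norm_mul, Complex.norm_I, Complex.norm_real, Real.norm_eq_abs]
    norm_num
  rw [h5]
  calc 2 * |Real.sin (θ/2)| ≤ 2 * |θ/2| := by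
        have := Real.abs_sin_le_abs (x := θ/2); linarith
    _ = |θ| := by rw [abs_div, abs_two]; ring


lemma coord_le_norm {k : ℕ} (y : EuclideanSpace ℝ (Fin k)) (i : Fin k) : |y i| ≤ ‖y‖ := by
  rw [EuclideanSpace.norm_eq]
  have h : |y i| = Real.sqrt (‖y i‖ ^ 2) := by
    rw [Real.sqrt_sq_eq_abs]; simp [Real.norm_eq_abs, abs_abs]
  rw [h]
  apply Real.sqrt_le_sqrt
  exact Finset.single_le_sum (f := fun j => ‖y j‖ ^ 2) (fun j _ => by positivity)
    (Finset.mem_univ i)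

example {k : ℕ} : MeasureTheory.Measure.IsAddHaarMeasure
    (volume : Measure (EuclideanSpace ℝ (Fin k))) := inferInstance

lemma integrableOn_inv_pow_ball {k m : ℕ} (hk : k = m + 1) {R : ℝ} (hR : 0 < R) :
    IntegrableOn (fun y : EuclideanSpace ℝ (Fin k) => (‖y‖ ^ m)⁻¹)
      (Metric.ball 0 R) volume := by
  set f : EuclideanSpace ℝ (Fin k) → ℝ := fun y => (‖y‖ ^ m)⁻¹ with hf
  have hmeas : Measurable f := (measurable_norm.pow_const m).inv
  refine ⟨hmeas.aestronglyMeasurable, ?_⟩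
  -- annuli
  set ρ : ℕ → ℝ := fun n => R * (2⁻¹ : ℝ) ^ n with hρ
  have hρpos : ∀ n, 0 < ρ n := fun n => by positivity
  have hρsucc : ∀ n, ρ n = 2 * ρ (n + 1) := fun n => by
    simp only [hρ, pow_succ]; ring
  set A : ℕ → Set (EuclideanSpace ℝ (Fin k)) := fun n =>
    Metric.closedBall 0 (ρ n) \ Metric.closedBall 0 (ρ (n + 1)) with hA
  have hcover : Metric.ball (0 : EuclideanSpace ℝ (Fin k)) R ⊆ {0} ∪ ⋃ n, A n := by
    intro y hy
    rcases eq_or_ne y 0 with h | h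
    · exact Or.inl h
    · right
      have hy0 : 0 < ‖y‖ := norm_pos_iff.2 h
      have hyR : ‖y‖ < R := by simpa using hy
      have hex : ∃ n, ρ (n + 1) < ‖y‖ := by
        obtain ⟨n, hn⟩ := exists_pow_lt_of_lt_one (div_pos hy0 hR) (by norm_num : (2⁻¹:ℝ) < 1)
        refine ⟨n, ?_⟩
        have : ρ (n+1) ≤ R * (2⁻¹:ℝ)^n := by
          simp only [hρ]
          exact mul_le_mul_of_nonneg_left
            (pow_le_pow_of_le_one (by norm_num) (by norm_num) (Nat.le_succ n)) hR.le
        calc ρ (n+1) ≤ R * (2⁻¹:ℝ)^n := this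
          _ < R * (‖y‖ / R) := by gcongr
          _ = ‖y‖ := by field_simp
      set n₀ := Nat.find hex with hn₀
      have h1 : ρ (n₀ + 1) < ‖y‖ := Nat.find_spec hex
      have h2 : ‖y‖ ≤ ρ n₀ := by
        rcases Nat.eq_zero_or_pos n₀ with h0 | h0
        · rw [h0]; simp only [hρ, pow_zero, mul_one]; exact hyR.le
        · have := Nat.find_min hex (m := n₀ - 1) (by omega)
          push_neg at this
          have heq : n₀ - 1 + 1 = n₀ := by omega
          rwa [heq] at this
      exact Set.mem_iUnion.2 ⟨n₀, by
        simp only [hA, Set.mem_diff, Metric.mem_closedBall, dist_zero_right, not_le]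
        exact ⟨h2, h1⟩⟩
  calc ∫⁻ y in Metric.ball 0 R, ‖f y‖₊ ∂volume
      ≤ ∫⁻ y in ({0} ∪ ⋃ n, A n), ‖f y‖₊ ∂volume := lintegral_mono_set hcover
    _ ≤ (∫⁻ y in ({0} : Set (EuclideanSpace ℝ (Fin k))), ‖f y‖₊ ∂volume)
        + ∫⁻ y in (⋃ n, A n), ‖f y‖₊ ∂volume := lintegral_union_le _ _ _
    _ ≤ 0 + ∑' n, ∫⁻ y in A n, ‖f y‖₊ ∂volume := by
        gcongr
        · haveI : Nonempty (Fin k) := ⟨⟨0, by omega⟩⟩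
          have : (volume : Measure (EuclideanSpace ℝ (Fin k))) {0} = 0 :=
            measure_singleton 0
          rw [setLIntegral_measure_zero _ _ this]
        · exact lintegral_iUnion_le _ _
    _ < ⊤ := by
        rw [zero_add]
        have hbound : ∀ n, ∫⁻ y in A n, ‖f y‖₊ ∂volume ≤
            ENNReal.ofReal ((ρ (n+1) ^ m)⁻¹) * (ENNReal.ofReal (ρ n ^ k)
              * volume (Metric.ball (0 : EuclideanSpace ℝ (Fin k)) 1)) := by
          intro n
          have hAmeas : MeasurableSet (A n) :=
            measurableSet_closedBall.diff measurableSet_closedBall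
          have hstep : ∫⁻ y in A n, ‖f y‖₊ ∂volume ≤
              ∫⁻ _ in A n, ENNReal.ofReal ((ρ (n+1) ^ m)⁻¹) ∂volume := by
            apply setLIntegral_mono' hAmeas
            intro y hy
            have hylb : ρ (n+1) < ‖y‖ := by
              have := hy.2
              simpa [Metric.mem_closedBall, dist_zero_right, not_le] using this
            have hy0 : 0 < ‖y‖ := (hρpos (n+1)).trans hylb
            have : f y ≤ (ρ (n+1) ^ m)⁻¹ := by
              apply inv_anti₀ (by positivity)
              exact pow_le_pow_left₀ (hρpos (n+1)).le hylb.le m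
            calc (‖f y‖₊ : ℝ≥0∞) = ENNReal.ofReal (f y) := by
                  rw [← enorm_eq_nnnorm, ← ofReal_norm, Real.norm_eq_abs,
                    abs_of_nonneg (by positivity)]
              _ ≤ ENNReal.ofReal ((ρ (n+1) ^ m)⁻¹) := ENNReal.ofReal_le_ofReal this
          rw [setLIntegral_const] at hstep
          refine hstep.trans (mul_le_mul_right ?_ _)
          calc volume (A n) ≤ volume (Metric.closedBall (0 : EuclideanSpace ℝ (Fin k)) (ρ n)) :=
                measure_mono Set.diff_subset
            _ = ENNReal.ofReal (ρ n ^ Module.finrank ℝ (EuclideanSpace ℝ (Fin k)))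
                * volume (Metric.ball (0 : EuclideanSpace ℝ (Fin k)) 1) :=
                Measure.addHaar_closedBall _ _ (hρpos n).le
            _ = ENNReal.ofReal (ρ n ^ k) * volume (Metric.ball (0 : EuclideanSpace ℝ (Fin k)) 1) := by
                rw [finrank_euclideanSpace_fin]
        have hval : ∀ n, ENNReal.ofReal ((ρ (n+1) ^ m)⁻¹) * (ENNReal.ofReal (ρ n ^ k)
              * volume (Metric.ball (0 : EuclideanSpace ℝ (Fin k)) 1))
            = ENNReal.ofReal (R * 2 ^ m) * ENNReal.ofReal ((2⁻¹:ℝ) ^ n)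
              * volume (Metric.ball (0 : EuclideanSpace ℝ (Fin k)) 1) := by
          intro n
          have key : (ρ (n+1) ^ m)⁻¹ * ρ n ^ k = (R * 2 ^ m) * (2⁻¹:ℝ) ^ n := by
            simp only [hρ, hk]
            field_simp
            have h3 : ((1:ℝ)/2)^m * 2^m = 1 := by rw [← mul_pow]; norm_num
            linear_combination (-(R*(1/2:ℝ)^n)^(m+1)) * h3
          rw [← mul_assoc, ← ENNReal.ofReal_mul (by positivity), key,
            ENNReal.ofReal_mul (by positivity)]
        calc ∑' n, ∫⁻ y in A n, ‖f y‖₊ ∂volume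
            ≤ ∑' n, (ENNReal.ofReal (R * 2 ^ m) * ENNReal.ofReal ((2⁻¹:ℝ) ^ n)
              * volume (Metric.ball (0 : EuclideanSpace ℝ (Fin k)) 1)) := by
              apply ENNReal.tsum_le_tsum
              intro n
              exact (hbound n).trans_eq (hval n)
          _ = ENNReal.ofReal (R * 2 ^ m) * (∑' n, ENNReal.ofReal ((2⁻¹:ℝ) ^ n))
              * volume (Metric.ball (0 : EuclideanSpace ℝ (Fin k)) 1) := by
              rw [ENNReal.tsum_mul_right, ENNReal.tsum_mul_left]
          _ < ⊤ := by
              apply ENNReal.mul_lt_top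
              · apply ENNReal.mul_lt_top ENNReal.ofReal_lt_top
                have h2 : ENNReal.ofReal (2⁻¹:ℝ) = (2⁻¹ : ℝ≥0∞) := by
                  rw [ENNReal.ofReal_inv_of_pos (by norm_num)]
                  norm_num
                have : ∀ n, ENNReal.ofReal ((2⁻¹:ℝ) ^ n) = (2⁻¹ : ℝ≥0∞) ^ n := by
                  intro n
                  rw [ENNReal.ofReal_pow (by norm_num), h2]
                simp_rw [this]
                rw [ENNReal.tsum_geometric]
                simp
              · exact measure_ball_lt_top


lemma scale_integral {k m : ℕ} (hk : k = m + 1) {t : ℝ} (ht : 0 < t) :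
    ∫ y in Metric.ball (0 : EuclideanSpace ℝ (Fin k)) t, (‖y‖ ^ m)⁻¹
      = t * ∫ y in Metric.ball (0 : EuclideanSpace ℝ (Fin k)) 1, (‖y‖ ^ m)⁻¹ := by
  have h := MeasureTheory.Measure.setIntegral_comp_smul_of_pos (μ := volume)
    (fun y : EuclideanSpace ℝ (Fin k) => (‖y‖ ^ m)⁻¹) (Metric.ball 0 1) ht
  rw [_root_.smul_unitBall_of_pos ht, finrank_euclideanSpace_fin] at h
  have h2 : ∀ x : EuclideanSpace ℝ (Fin k), (‖t • x‖ ^ m)⁻¹ = (t ^ m)⁻¹ * (‖x‖ ^ m)⁻¹ := by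
    intro x
    rw [norm_smul, Real.norm_eq_abs, abs_of_pos ht, mul_pow, mul_inv]
  simp only [h2] at h
  rw [integral_const_mul] at h
  rw [smul_eq_mul] at h
  have htk : (0:ℝ) < t ^ k := by positivity
  have := congrArg (fun z => (t ^ k) * z) h
  simp only at this
  rw [← mul_assoc, ← mul_assoc, mul_inv_cancel₀ htk.ne', one_mul] at this
  rw [← this, hk, pow_succ]
  field_simp
lemma key_bound (k m : ℕ) (hk : k = m + 1) (Γ : Finset (Fin k → ℕ))
    (hΓ0 : ∀ γ ∈ Γ, γ ≠ 0)
    (cΩ : ℝ) (hcΩ : 0 < cΩ)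
    (Ω : Set (EuclideanSpace ℝ (Fin k))) (hΩo : IsOpen Ω)
    (hin : Metric.ball 0 cΩ ⊆ Ω) (hout : Ω ⊆ Metric.ball 0 1)
    (K : EuclideanSpace ℝ (Fin k) → ℂ)
    (hKsize : ∀ x : EuclideanSpace ℝ (Fin k), x ≠ 0 → ‖K x‖ ≤ ‖x‖ ^ (-(k:ℝ)))
    (hKcancel : ∀ r R : ℝ, 0 < r → r < R →
        (∫ y in ({x | R⁻¹ • x ∈ Ω} \ {x | r⁻¹ • x ∈ Ω}), K y) = 0)
    (ξ : {γ // γ ∈ Γ} → ℝ) (t s ε : ℝ) (ht : 0 < t) (hε : 0 < ε) (hεs : ε < s)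
    (hst : s ≤ t) :
    ‖∫ y in ({x | s⁻¹ • x ∈ Ω} \ {x | ε⁻¹ • x ∈ Ω}),
        Complex.exp (2 * Real.pi * Complex.I *
          ((∑ γ : {γ // γ ∈ Γ}, ξ γ * ∏ i, (y i) ^ (γ.1 i) : ℝ) : ℂ)) * K y‖ ≤
      (2 * Real.pi * (∫ y in Metric.ball (0 : EuclideanSpace ℝ (Fin k)) 1, (‖y‖ ^ m)⁻¹))
        * ∑ γ : {γ // γ ∈ Γ}, |ξ γ| * t ^ (∑ i, γ.1 i) := by
  subst hk
  have hs : 0 < s := hε.trans hεs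
  set θ : EuclideanSpace ℝ (Fin (m+1)) → ℝ :=
    fun y => ∑ γ : {γ // γ ∈ Γ}, ξ γ * ∏ i, (y i) ^ (γ.1 i) with hθdef
  set g : EuclideanSpace ℝ (Fin (m+1)) → ℂ :=
    fun y => Complex.exp (2 * Real.pi * Complex.I * ((θ y : ℝ) : ℂ)) * K y with hgdef
  set S : Set (EuclideanSpace ℝ (Fin (m+1))) :=
    {x | s⁻¹ • x ∈ Ω} \ {x | ε⁻¹ • x ∈ Ω} with hSdef
  set A1 : ℝ := ∫ y in Metric.ball (0 : EuclideanSpace ℝ (Fin (m+1))) 1, (‖y‖ ^ m)⁻¹ with hA1def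
  have hA1 : 0 ≤ A1 := setIntegral_nonneg measurableSet_ball (fun y _ => by positivity)
  have hd : ∀ γ : {γ // γ ∈ Γ}, 1 ≤ ∑ i, γ.1 i := by
    intro γ
    by_contra h
    push_neg at h
    have h0 : ∑ i, γ.1 i = 0 := by omega
    apply hΓ0 γ.1 γ.2
    funext i
    exact Finset.sum_eq_zero_iff.1 h0 i (Finset.mem_univ i)
  set Cst : ℝ := ∑ γ : {γ // γ ∈ Γ}, |ξ γ| * t ^ (∑ i, γ.1 i - 1) with hCdef
  have hCst : 0 ≤ Cst := Finset.sum_nonneg fun γ _ => by positivity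
  have hθc : Continuous θ := by
    apply continuous_finset_sum
    intro γ _
    apply Continuous.mul continuous_const
    apply continuous_finset_prod
    intro i _
    exact ((EuclideanSpace.proj (𝕜 := ℝ) i).continuous).pow _
  have hSmeas : MeasurableSet S :=
    ((hΩo.preimage (continuous_const_smul s⁻¹)).measurableSet).diff
      ((hΩo.preimage (continuous_const_smul ε⁻¹)).measurableSet)
  have hSprop : ∀ y ∈ S, y ≠ 0 ∧ ‖y‖ < s := by
    rintro y ⟨hy1, hy2⟩
    constructor
    · rintro rfl
      exact hy2 (by simpa using hin (Metric.mem_ball_self hcΩ))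
    · have := hout hy1
      rw [Metric.mem_ball, dist_zero_right, norm_smul, Real.norm_eq_abs,
        abs_of_pos (inv_pos.2 hs)] at this
      calc ‖y‖ = s * (s⁻¹ * ‖y‖) := by field_simp
        _ < s * 1 := by exact mul_lt_mul_of_pos_left this hs
        _ = s := mul_one s
  have hSsub : S ⊆ Metric.ball 0 t := by
    intro y hy
    rw [Metric.mem_ball, dist_zero_right]
    exact (hSprop y hy).2.trans_le hst
  -- pointwise bound
  set hfun : EuclideanSpace ℝ (Fin (m+1)) → ℝ :=
    fun y => (2 * Real.pi * Cst) * (‖y‖ ^ m)⁻¹ with hhdef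
  have hpoint : ∀ y ∈ S,
      ‖(Complex.exp (2 * Real.pi * Complex.I * ((θ y : ℝ) : ℂ)) - 1) * K y‖ ≤ hfun y := by
    intro y hy
    obtain ⟨hy0, hys⟩ := hSprop y hy
    have hn0 : 0 < ‖y‖ := norm_pos_iff.2 hy0
    have hyt : ‖y‖ ≤ t := (hys.trans_le hst).le
    have hKb : ‖K y‖ ≤ (‖y‖ ^ (m+1))⁻¹ := by
      have h := hKsize y hy0
      rwa [Real.rpow_neg (norm_nonneg _), Real.rpow_natCast] at h
    have hexp : ‖Complex.exp (2 * Real.pi * Complex.I * ((θ y : ℝ) : ℂ)) - 1‖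
        ≤ 2 * Real.pi * |θ y| := by
      have h := norm_exp_mul_I_sub_one_le (2 * Real.pi * θ y)
      have hcast : (((2 * Real.pi * θ y : ℝ)) : ℂ) * Complex.I
          = 2 * Real.pi * Complex.I * ((θ y : ℝ) : ℂ) := by push_cast; ring
      rw [hcast] at h
      refine h.trans_eq ?_
      rw [abs_mul, abs_mul, abs_two, abs_of_pos Real.pi_pos]
    have hθb : |θ y| ≤ ∑ γ : {γ // γ ∈ Γ}, |ξ γ| * ‖y‖ ^ (∑ i, γ.1 i) := by
      refine (Finset.abs_sum_le_sum_abs _ _).trans (Finset.sum_le_sum ?_)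
      intro γ _
      rw [abs_mul]
      apply mul_le_mul_of_nonneg_left _ (abs_nonneg _)
      calc |∏ i, (y i) ^ (γ.1 i)| = ∏ i, |y i| ^ (γ.1 i) := by
            rw [Finset.abs_prod]
            exact Finset.prod_congr rfl fun i _ => abs_pow _ _
        _ ≤ ∏ i, ‖y‖ ^ (γ.1 i) :=
            Finset.prod_le_prod (fun i _ => by positivity)
              (fun i _ => pow_le_pow_left₀ (abs_nonneg _) (coord_le_norm y i) _)
        _ = ‖y‖ ^ (∑ i, γ.1 i) := Finset.prod_pow_eq_pow_sum _ _ _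
    have hterm : ∀ γ : {γ // γ ∈ Γ},
        ‖y‖ ^ (∑ i, γ.1 i) * (‖y‖ ^ (m+1))⁻¹ ≤ t ^ (∑ i, γ.1 i - 1) * (‖y‖ ^ m)⁻¹ := by
      intro γ
      have h1 : ‖y‖ ^ (∑ i, γ.1 i) = ‖y‖ ^ (∑ i, γ.1 i - 1) * ‖y‖ := by
        rw [← pow_succ, Nat.sub_add_cancel (hd γ)]
      have h2 : ‖y‖ * (‖y‖ ^ (m+1))⁻¹ = (‖y‖ ^ m)⁻¹ := by
        rw [pow_succ]
        field_simp
      calc ‖y‖ ^ (∑ i, γ.1 i) * (‖y‖ ^ (m+1))⁻¹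
          = ‖y‖ ^ (∑ i, γ.1 i - 1) * (‖y‖ * (‖y‖ ^ (m+1))⁻¹) := by rw [h1]; ring
        _ = ‖y‖ ^ (∑ i, γ.1 i - 1) * (‖y‖ ^ m)⁻¹ := by rw [h2]
        _ ≤ t ^ (∑ i, γ.1 i - 1) * (‖y‖ ^ m)⁻¹ := by
            apply mul_le_mul_of_nonneg_right
              (pow_le_pow_left₀ (norm_nonneg _) hyt _) (by positivity)
    calc ‖(Complex.exp (2 * Real.pi * Complex.I * ((θ y : ℝ) : ℂ)) - 1) * K y‖
        = ‖Complex.exp (2 * Real.pi * Complex.I * ((θ y : ℝ) : ℂ)) - 1‖ * ‖K y‖ :=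
          norm_mul _ _
      _ ≤ (2 * Real.pi * |θ y|) * (‖y‖ ^ (m+1))⁻¹ :=
          mul_le_mul hexp hKb (norm_nonneg _) (by positivity)
      _ ≤ (2 * Real.pi * (∑ γ : {γ // γ ∈ Γ}, |ξ γ| * ‖y‖ ^ (∑ i, γ.1 i))) * (‖y‖ ^ (m+1))⁻¹ := by
          apply mul_le_mul_of_nonneg_right _ (by positivity)
          have hp : (0:ℝ) < 2 * Real.pi := by positivity
          nlinarith [hθb]
      _ = 2 * Real.pi * ∑ γ : {γ // γ ∈ Γ}, |ξ γ| * (‖y‖ ^ (∑ i, γ.1 i) * (‖y‖ ^ (m+1))⁻¹) := by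
          rw [mul_assoc, Finset.sum_mul]
          congr 1
          exact Finset.sum_congr rfl fun γ _ => by ring
      _ ≤ 2 * Real.pi * ∑ γ : {γ // γ ∈ Γ}, |ξ γ| * (t ^ (∑ i, γ.1 i - 1) * (‖y‖ ^ m)⁻¹) := by
          apply mul_le_mul_of_nonneg_left _ (by positivity)
          exact Finset.sum_le_sum fun γ _ =>
            mul_le_mul_of_nonneg_left (hterm γ) (abs_nonneg _)
      _ = hfun y := by
          have hsum : ∑ γ : {γ // γ ∈ Γ}, |ξ γ| * (t ^ (∑ i, γ.1 i - 1) * (‖y‖ ^ m)⁻¹)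
              = Cst * (‖y‖ ^ m)⁻¹ := by
            rw [hCdef, Finset.sum_mul]
            exact Finset.sum_congr rfl fun γ _ => by ring
          simp only [hhdef]
          rw [hsum]
          ring
  -- integrability of dominating function
  have hbase_int : IntegrableOn (fun y : EuclideanSpace ℝ (Fin (m+1)) => (‖y‖ ^ m)⁻¹)
      (Metric.ball 0 t) volume := integrableOn_inv_pow_ball rfl ht
  have hh_int_ball : IntegrableOn hfun (Metric.ball 0 t) volume := hbase_int.const_mul _
  have hh_int_S : IntegrableOn hfun S volume := hh_int_ball.mono_set hSsub
  by_cases hI : IntegrableOn g S volume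
  · -- main case
    have hgm := hI.aestronglyMeasurable
    have hexpc : Continuous fun y : EuclideanSpace ℝ (Fin (m+1)) =>
        Complex.exp (2 * Real.pi * Complex.I * ((θ y : ℝ) : ℂ)) := by
      apply Complex.continuous_exp.comp
      exact (continuous_const.mul (Complex.continuous_ofReal.comp hθc))
    have hexpc' : Continuous fun y : EuclideanSpace ℝ (Fin (m+1)) =>
        Complex.exp (-(2 * Real.pi * Complex.I * ((θ y : ℝ) : ℂ))) := by
      apply Complex.continuous_exp.comp
      exact (continuous_const.mul (Complex.continuous_ofReal.comp hθc)).neg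
    have hKm : AEStronglyMeasurable K (volume.restrict S) := by
      have heq : (fun y => g y * Complex.exp (-(2 * Real.pi * Complex.I * ((θ y : ℝ) : ℂ)))) = K := by
        funext y
        simp only [hgdef]
        calc Complex.exp (2 * Real.pi * Complex.I * ((θ y : ℝ) : ℂ)) * K y *
              Complex.exp (-(2 * Real.pi * Complex.I * ((θ y : ℝ) : ℂ)))
            = K y * (Complex.exp (2 * Real.pi * Complex.I * ((θ y : ℝ) : ℂ)) *
              Complex.exp (-(2 * Real.pi * Complex.I * ((θ y : ℝ) : ℂ)))) := by ring
          _ = K y := by rw [← Complex.exp_add, add_neg_cancel, Complex.exp_zero, mul_one]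
      rw [← heq]
      exact hgm.mul hexpc'.aestronglyMeasurable
    have h2 : IntegrableOn
        (fun y => (Complex.exp (2 * Real.pi * Complex.I * ((θ y : ℝ) : ℂ)) - 1) * K y)
        S volume := by
      apply Integrable.mono' hh_int_S
        ((hexpc.aestronglyMeasurable.sub aestronglyMeasurable_const).mul hKm)
      filter_upwards [ae_restrict_mem hSmeas] with y hy using hpoint y hy
    have hKi : IntegrableOn K S volume := by
      apply (hI.sub h2).congr
      apply ae_of_all
      intro y
      simp only [hgdef, Pi.sub_apply]
      ring
    have hsplit : (∫ y in S, g y) =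
        ∫ y in S, (Complex.exp (2 * Real.pi * Complex.I * ((θ y : ℝ) : ℂ)) - 1) * K y := by
      calc (∫ y in S, g y)
          = ∫ y in S, ((Complex.exp (2 * Real.pi * Complex.I * ((θ y : ℝ) : ℂ)) - 1) * K y
            + K y) := by
            apply integral_congr_ae
            apply ae_of_all
            intro y
            simp only [hgdef]
            ring
        _ = (∫ y in S, (Complex.exp (2 * Real.pi * Complex.I * ((θ y : ℝ) : ℂ)) - 1) * K y)
            + ∫ y in S, K y := integral_add h2 hKi
        _ = _ := by rw [hKcancel ε s hε hεs, add_zero]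
    have hCt : Cst * t = ∑ γ : {γ // γ ∈ Γ}, |ξ γ| * t ^ (∑ i, γ.1 i) := by
      rw [hCdef, Finset.sum_mul]
      refine Finset.sum_congr rfl fun γ _ => ?_
      rw [mul_assoc, ← pow_succ, Nat.sub_add_cancel (hd γ)]
    calc ‖∫ y in S, g y‖
        = ‖∫ y in S, (Complex.exp (2 * Real.pi * Complex.I * ((θ y : ℝ) : ℂ)) - 1) * K y‖ := by
          rw [hsplit]
      _ ≤ ∫ y in S, ‖(Complex.exp (2 * Real.pi * Complex.I * ((θ y : ℝ) : ℂ)) - 1) * K y‖ :=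
          norm_integral_le_integral_norm _
      _ ≤ ∫ y in S, hfun y := setIntegral_mono_on h2.norm hh_int_S hSmeas hpoint
      _ ≤ ∫ y in Metric.ball 0 t, hfun y := by
          apply setIntegral_mono_set hh_int_ball
          · apply ae_of_all
            intro y
            simp only [hhdef]
            positivity
          · exact HasSubset.Subset.eventuallyLE hSsub
      _ = 2 * Real.pi * Cst * (t * A1) := by
          simp only [hhdef]
          rw [integral_const_mul, scale_integral rfl ht]
      _ = (2 * Real.pi * A1) * (Cst * t) := by ring
      _ = (2 * Real.pi * A1) * ∑ γ : {γ // γ ∈ Γ}, |ξ γ| * t ^ (∑ i, γ.1 i) := by rw [hCt]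
  · rw [integral_undef hI]
    rw [norm_zero]
    apply mul_nonneg (by positivity)
    exact Finset.sum_nonneg fun γ _ => by positivity

/-- If `Ψ_t(ξ)` is the principal value `p.v. ∫_{Ω_t} e(ξ·(y)^Γ) K(y) dy` for a
Calderón–Zygmund kernel `K` satisfying the size and cancellation conditions, then for a
fixed `c ∈ (0,1)` one has `|Ψ_t(ξ) − Ψ_{ct}(ξ)| ≤ C |t^A ξ|_∞`, where
`t^A ξ = (t^{|γ|} ξ_γ)_γ` and `C` does not depend on `t`, `ξ`, `Ω`, `K`, `Ψ`. -/
theorem psi_difference_bound (k : ℕ) (hk : 1 ≤ k) (Γ : Finset (Fin k → ℕ))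
    (hΓ0 : ∀ γ ∈ Γ, γ ≠ 0) (hΓne : Γ.Nonempty)
    (c : ℝ) (hc : c ∈ Set.Ioo (0:ℝ) 1) (cΩ : ℝ) (hcΩ : cΩ ∈ Set.Ioo (0:ℝ) 1) :
    ∃ C > 0, ∀ (Ω : Set (EuclideanSpace ℝ (Fin k))),
      Convex ℝ Ω → IsOpen Ω → Metric.ball 0 cΩ ⊆ Ω → Ω ⊆ Metric.ball 0 1 →
      ∀ (K : EuclideanSpace ℝ (Fin k) → ℂ),
      (∀ x : EuclideanSpace ℝ (Fin k), x ≠ 0 → ‖K x‖ ≤ ‖x‖ ^ (-(k:ℝ))) →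
      (∀ r R : ℝ, 0 < r → r < R →
        (∫ y in ({x | R⁻¹ • x ∈ Ω} \ {x | r⁻¹ • x ∈ Ω}), K y) = 0) →
      ∀ (Ψ : ℝ → ({γ // γ ∈ Γ} → ℝ) → ℂ),
      (∀ t : ℝ, 0 < t → ∀ ξ : {γ // γ ∈ Γ} → ℝ,
        Tendsto (fun ε : ℝ =>
            ∫ y in ({x | t⁻¹ • x ∈ Ω} \ {x | ε⁻¹ • x ∈ Ω}),
              Complex.exp (2 * Real.pi * Complex.I *
                ((∑ γ : {γ // γ ∈ Γ}, ξ γ * ∏ i, (y i) ^ (γ.1 i) : ℝ) : ℂ)) * K y)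
          (𝓝[>] (0:ℝ)) (𝓝 (Ψ t ξ))) →
      ∀ t : ℝ, 0 < t → ∀ ξ : {γ // γ ∈ Γ} → ℝ,
        ‖Ψ t ξ - Ψ (c * t) ξ‖ ≤ C * ⨆ γ : {γ // γ ∈ Γ}, t ^ (∑ i, γ.1 i) * |ξ γ| := by
  obtain ⟨hc0, hc1⟩ := hc
  obtain ⟨hcΩ0, hcΩ1⟩ := hcΩ
  obtain ⟨m, hm⟩ : ∃ m, k = m + 1 := ⟨k - 1, by omega⟩
  set A1 : ℝ := ∫ y in Metric.ball (0 : EuclideanSpace ℝ (Fin k)) 1, (‖y‖ ^ m)⁻¹ with hA1def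
  have hA1 : 0 ≤ A1 := setIntegral_nonneg measurableSet_ball (fun y _ => by positivity)
  have hCnn : 0 ≤ 2 * Real.pi * A1 * (Γ.card : ℝ) := by positivity
  refine ⟨2 * (2 * Real.pi * A1 * (Γ.card : ℝ)) + 1, by linarith, ?_⟩
  intro Ω hconv hΩo hin hout K hKsize hKcancel Ψ hΨ t ht ξ
  set M : ℝ := ⨆ γ : {γ // γ ∈ Γ}, t ^ (∑ i, γ.1 i) * |ξ γ| with hMdef
  have hbdd : BddAbove (Set.range fun γ : {γ // γ ∈ Γ} => t ^ (∑ i, γ.1 i) * |ξ γ|) :=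
    Set.Finite.bddAbove (Set.finite_range _)
  have hM0 : 0 ≤ M := by
    obtain ⟨γ0, hγ0⟩ := hΓne
    calc (0:ℝ) ≤ t ^ (∑ i, (⟨γ0, hγ0⟩ : {γ // γ ∈ Γ}).1 i) * |ξ ⟨γ0, hγ0⟩| := by positivity
      _ ≤ M := le_ciSup hbdd _
  have hsum_le : ∑ γ : {γ // γ ∈ Γ}, |ξ γ| * t ^ (∑ i, γ.1 i) ≤ (Γ.card : ℝ) * M := by
    calc ∑ γ : {γ // γ ∈ Γ}, |ξ γ| * t ^ (∑ i, γ.1 i)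
        ≤ ∑ _γ : {γ // γ ∈ Γ}, M := Finset.sum_le_sum fun γ _ => by
          rw [mul_comm]; exact le_ciSup hbdd γ
      _ = (Γ.card : ℝ) * M := by
          rw [Finset.sum_const, Finset.card_univ, Fintype.card_coe, nsmul_eq_mul]
  have key : ∀ s : ℝ, 0 < s → s ≤ t → ‖Ψ s ξ‖ ≤ 2 * Real.pi * A1 * ((Γ.card : ℝ) * M) := by
    intro s hs hst
    apply le_of_tendsto (hΨ s hs ξ).norm
    filter_upwards [Ioo_mem_nhdsGT_of_mem (Set.left_mem_Ico.2 hs)] with ε hε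
    have hb := key_bound k m hm Γ hΓ0 cΩ hcΩ0 Ω hΩo hin hout K hKsize hKcancel ξ t s ε
      ht hε.1 hε.2 hst
    rw [← hA1def] at hb
    refine hb.trans ?_
    exact mul_le_mul_of_nonneg_left hsum_le (by positivity)
  have h1 := key t ht le_rfl
  have h2 := key (c * t) (by positivity) (by nlinarith)
  calc ‖Ψ t ξ - Ψ (c * t) ξ‖ ≤ ‖Ψ t ξ‖ + ‖Ψ (c * t) ξ‖ := norm_sub_le _ _
    _ ≤ 2 * Real.pi * A1 * ((Γ.card : ℝ) * M) + 2 * Real.pi * A1 * ((Γ.card : ℝ) * M) :=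
        add_le_add h1 h2
    _ ≤ (2 * (2 * Real.pi * A1 * (Γ.card : ℝ)) + 1) * M := by nlinarith


end
end

section
/- (Rademacher–Menshov inequality) Let K ∈ ℕ, and let f_0, f_1, ..., f_{2^K} be elements of a normed space (or complex numbers). Then for any increasing sequence 0 ≤ n_0 < n_1 < ... < n_M ≤ 2^K, ( Σ_{m=0}^{M-1} |f_{n_{m+1}} − f_{n_m}|² )^{1/2} ≤ √2 Σ_{i=0}^{K} ( Σ_{j} | Σ_{k ∈ I_j^i} (f_{k+1} − f_k) |² )^{1/2}, where I_j^i := [j2^i, (j+1)2^i) ∩ [0, 2^K] and the inner sum over j ranges over all j with I_j^i nonempty. -/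
open Finset

namespace RademacherMenshov

/-- The scale-`i` dyadic interval containing `k` sits inside `[a,b)`. -/
abbrev D (a b k i : ℕ) : Prop := a ≤ k / 2 ^ i * 2 ^ i ∧ (k / 2 ^ i + 1) * 2 ^ i ≤ b

/-- Maximal dyadic interval predicate: the scale-`i` dyadic interval indexed by `j`
is contained in `[a,b)` but its parent is not. -/
abbrev P (a b i j : ℕ) : Prop :=
  a ≤ j * 2 ^ i ∧ (j + 1) * 2 ^ i ≤ b ∧
    ¬ (a ≤ j / 2 * 2 ^ (i + 1) ∧ (j / 2 + 1) * 2 ^ (i + 1) ≤ b)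

lemma D_step {a b k i : ℕ} (h : D a b k (i + 1)) : D a b k i := by
  obtain ⟨h1, h2⟩ := h
  have hdiv : k / 2 ^ (i + 1) = k / 2 ^ i / 2 := by
    rw [pow_succ, ← Nat.div_div_eq_div_mul]
  rw [hdiv] at h1 h2
  set d := k / 2 ^ i with hd
  have key : d / 2 * 2 ^ (i + 1) = d / 2 * 2 * 2 ^ i := by rw [pow_succ]; ring
  have key2 : (d / 2 + 1) * 2 ^ (i + 1) = (d / 2 * 2 + 2) * 2 ^ i := by rw [pow_succ]; ring
  constructor
  · refine h1.trans ?_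
    rw [key]
    exact Nat.mul_le_mul_right _ (by omega)
  · refine le_trans (Nat.mul_le_mul_right _ ?_) (key2 ▸ h2)
    omega

lemma D_mono {a b k i i' : ℕ} (h : i ≤ i') (hD : D a b k i') : D a b k i := by
  obtain ⟨d, rfl⟩ := Nat.exists_eq_add_of_le h
  clear h
  revert hD
  induction d with
  | zero => exact fun h => h
  | succ m ih =>
    intro hD
    exact ih (D_step (by rwa [Nat.add_succ] at hD))

lemma not_lt_aux {a b i i' j j' k : ℕ} (hlt : i < i')
    (hp : P a b i j) (hp' : P a b i' j')
    (hj : k / 2 ^ i = j) (hj' : k / 2 ^ i' = j') : False := by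
  apply hp.2.2
  have hD' : D a b k i' := by rw [D, hj']; exact ⟨hp'.1, hp'.2.1⟩
  have hD : D a b k (i + 1) := D_mono hlt hD'
  have hdd : k / 2 ^ (i + 1) = j / 2 := by
    rw [← hj, pow_succ, ← Nat.div_div_eq_div_mul]
  rw [D, hdd] at hD
  exact hD

lemma exists_scale {a b K k : ℕ} (hb : b ≤ 2 ^ K) (hak : a ≤ k) (hkb : k < b) :
    ∃ i ≤ K, P a b i (k / 2 ^ i) ∧ k / 2 ^ i * 2 ^ i ≤ k ∧ k < (k / 2 ^ i + 1) * 2 ^ i := by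
  have hQ0 : D a b k 0 := by
    simp only [D, pow_zero, Nat.div_one, mul_one]
    omega
  set i := Nat.findGreatest (D a b k) K with hi
  have hiK : i ≤ K := Nat.findGreatest_le K
  have hQi : D a b k i := Nat.findGreatest_spec (Nat.zero_le K) hQ0
  have hnot : ¬ D a b k (i + 1) := by
    rcases Nat.lt_or_ge i K with h | h
    · exact Nat.findGreatest_is_greatest (n := K) (by rw [← hi]; omega) (by omega)
    · have hiK' : i = K := le_antisymm hiK h
      rintro ⟨-, h2⟩
      have h3 : 2 ^ (i + 1) ≤ (k / 2 ^ (i + 1) + 1) * 2 ^ (i + 1) :=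
        Nat.le_mul_of_pos_left _ (Nat.succ_pos _)
      have h4 : 2 ^ K < 2 ^ (K + 1) := Nat.pow_lt_pow_succ (by norm_num)
      rw [hiK'] at h3 h2
      omega
  have hpos : 0 < 2 ^ i := pow_pos two_pos i
  refine ⟨i, hiK, ⟨hQi.1, hQi.2, ?_⟩, Nat.div_mul_le_self _ _,
    (Nat.div_lt_iff_lt_mul hpos).mp (Nat.lt_succ_self _)⟩
  have hdd : k / 2 ^ i / 2 = k / 2 ^ (i + 1) := by
    rw [pow_succ, ← Nat.div_div_eq_div_mul]
  rw [hdd]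
  exact hnot

lemma parity_lt {a b i j j' : ℕ} (hp : P a b i j) (hp' : P a b i j')
    (hpar : j % 2 = j' % 2) (hlt : j < j') : False := by
  rcases Nat.even_or_odd j' with he | ho
  · -- both even: the parent of `j` is contained in `[a,b)`
    have hje : j % 2 = 0 := by
      obtain ⟨t, ht⟩ := he; omega
    apply hp.2.2
    have e1 : j / 2 * 2 ^ (i + 1) = j * 2 ^ i := by
      rw [pow_succ]
      have h2 : j / 2 * 2 = j := by omega
      calc j / 2 * (2 ^ i * 2) = j / 2 * 2 * 2 ^ i := by ring
        _ = j * 2 ^ i := by rw [h2]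
    have e2 : (j / 2 + 1) * 2 ^ (i + 1) = (j + 2) * 2 ^ i := by
      rw [pow_succ]
      have h2 : j / 2 * 2 = j := by omega
      calc (j / 2 + 1) * (2 ^ i * 2) = (j / 2 * 2 + 2) * 2 ^ i := by ring
        _ = (j + 2) * 2 ^ i := by rw [h2]
    refine ⟨e1 ▸ hp.1, ?_⟩
    rw [e2]
    refine le_trans (Nat.mul_le_mul_right _ ?_) hp'.2.1
    omega
  · -- both odd: the parent of `j'` is contained in `[a,b)`
    have hjo : j' % 2 = 1 := Nat.odd_iff.mp ho
    apply hp'.2.2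
    have e1 : j' / 2 * 2 ^ (i + 1) = (j' - 1) * 2 ^ i := by
      rw [pow_succ]
      have h2 : j' / 2 * 2 = j' - 1 := by omega
      calc j' / 2 * (2 ^ i * 2) = j' / 2 * 2 * 2 ^ i := by ring
        _ = (j' - 1) * 2 ^ i := by rw [h2]
    have e2 : (j' / 2 + 1) * 2 ^ (i + 1) = (j' + 1) * 2 ^ i := by
      rw [pow_succ]
      have h2 : j' / 2 * 2 = j' - 1 := by omega
      calc (j' / 2 + 1) * (2 ^ i * 2) = (j' / 2 * 2 + 2) * 2 ^ i := by ring
        _ = (j' + 1) * 2 ^ i := by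
            congr 1
            omega
    refine ⟨?_, e2 ▸ hp'.2.1⟩
    rw [e1]
    refine le_trans hp.1 (Nat.mul_le_mul_right _ ?_)
    omega

lemma card_le_two (a b i N : ℕ) : ((range N).filter (fun j => P a b i j)).card ≤ 2 := by
  have h := Finset.card_le_card_of_injOn (f := fun j => j % 2)
    (s := (range N).filter (fun j => P a b i j)) (t := range 2)
    (fun j _ => mem_range.mpr (Nat.mod_lt _ (by norm_num)))
    (by
      intro x hx y hy hxy
      simp only [coe_filter, Set.mem_setOf_eq, mem_range] at hx hy
      rcases lt_trichotomy x y with h | h | h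
      · exact (parity_lt hx.2 hy.2 hxy h).elim
      · exact h
      · exact (parity_lt hy.2 hx.2 hxy.symm h).elim)
  simpa using h

lemma partition {K a b : ℕ} (hb : b ≤ 2 ^ K) (x : ℕ → ℂ) :
    ∑ i ∈ range (K + 1), ∑ j ∈ (range (2 ^ (K - i) + 1)).filter (fun j => P a b i j),
        ∑ k ∈ Ico (j * 2 ^ i) ((j + 1) * 2 ^ i), x k
      = ∑ k ∈ Ico a b, x k := by
  classical
  rw [Finset.sum_sigma']
  rw [← Finset.sum_biUnion]
  · congr 1
    ext k
    simp only [mem_biUnion, mem_sigma, mem_filter, mem_range, mem_Ico, Sigma.exists]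
    constructor
    · rintro ⟨i, j, ⟨hi, hj, hp⟩, hk1, hk2⟩
      exact ⟨le_trans hp.1 hk1, lt_of_lt_of_le hk2 hp.2.1⟩
    · rintro ⟨hak, hkb⟩
      obtain ⟨i, hiK, hp, hk1, hk2⟩ := exists_scale hb hak hkb
      refine ⟨i, k / 2 ^ i, ⟨by omega, ?_, hp⟩, hk1, hk2⟩
      have h1 : (k / 2 ^ i + 1) * 2 ^ i ≤ 2 ^ K := le_trans hp.2.1 hb
      have h2 : 2 ^ K = 2 ^ (K - i) * 2 ^ i := by
        rw [← pow_add]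
        congr 1
        omega
      rw [h2] at h1
      have := Nat.le_of_mul_le_mul_right h1 (pow_pos two_pos i)
      omega
  · rintro ⟨i, j⟩ hp ⟨i', j'⟩ hq hpq
    simp only [mem_coe, mem_sigma, mem_filter, mem_range] at hp hq
    apply Finset.disjoint_left.mpr
    intro k hk hk'
    simp only [mem_Ico] at hk hk'
    have hj : k / 2 ^ i = j := Nat.div_eq_of_lt_le hk.1 hk.2
    have hj' : k / 2 ^ i' = j' := Nat.div_eq_of_lt_le hk'.1 hk'.2
    rcases lt_trichotomy i i' with h | h | h
    · exact not_lt_aux h hp.2.2 hq.2.2 hj hj'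
    · subst h
      exact hpq (by rw [← hj, ← hj'])
    · exact not_lt_aux h hq.2.2 hp.2.2 hj' hj

/-- Minkowski's inequality for finite double sums. -/
lemma minkowski (M : ℕ) (s : Finset ℕ) (u : ℕ → ℕ → ℝ) :
    Real.sqrt (∑ m ∈ range M, (∑ i ∈ s, u i m) ^ 2)
      ≤ ∑ i ∈ s, Real.sqrt (∑ m ∈ range M, u i m ^ 2) := by
  classical
  let U : ℕ → EuclideanSpace ℝ (Fin M) := fun i => WithLp.toLp 2 (fun m => u i (m : ℕ))
  have hnorm : ∀ i, ‖U i‖ = Real.sqrt (∑ m ∈ range M, u i m ^ 2) := by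
    intro i
    rw [EuclideanSpace.norm_eq]
    congr 1
    rw [← Fin.sum_univ_eq_sum_range (fun m => u i m ^ 2)]
    exact Finset.sum_congr rfl fun m _ => by simp only [U, WithLp.ofLp_toLp, Real.norm_eq_abs, sq_abs]
  have happ : ∀ m : Fin M, (∑ i ∈ s, U i) m = ∑ i ∈ s, u i (m : ℕ) := by
    intro m
    simp only [WithLp.ofLp_sum, Finset.sum_apply, U, WithLp.ofLp_toLp]
  have hsum : ‖∑ i ∈ s, U i‖ = Real.sqrt (∑ m ∈ range M, (∑ i ∈ s, u i m) ^ 2) := by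
    rw [EuclideanSpace.norm_eq]
    congr 1
    rw [← Fin.sum_univ_eq_sum_range (fun m => (∑ i ∈ s, u i m) ^ 2)]
    refine Finset.sum_congr rfl fun m _ => ?_
    rw [Real.norm_eq_abs, sq_abs, happ m]
  calc Real.sqrt (∑ m ∈ range M, (∑ i ∈ s, u i m) ^ 2) = ‖∑ i ∈ s, U i‖ := hsum.symm
    _ ≤ ∑ i ∈ s, ‖U i‖ := norm_sum_le _ _
    _ = _ := Finset.sum_congr rfl fun i _ => hnorm i

end RademacherMenshov

/-- The Rademacher–Menshov inequality (pointwise/scalar form): for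
`0 ≤ n_0 < n_1 < … < n_M ≤ 2^K`,
`(Σ_m |f_{n_{m+1}} − f_{n_m}|²)^{1/2} ≤ √2 Σ_{i=0}^K (Σ_j |Σ_{k ∈ I_j^i} (f_{k+1} − f_k)|²)^{1/2}`,
where `I_j^i = [j2^i, (j+1)2^i) ∩ [0, 2^K]`. -/
theorem rademacher_menshov (K M : ℕ) (f : ℕ → ℂ) (n : ℕ → ℕ)
    (hmono : StrictMonoOn n (Set.Iic M)) (hle : n M ≤ 2 ^ K) :
    Real.sqrt (∑ m ∈ Finset.range M, ‖f (n (m + 1)) - f (n m)‖ ^ 2) ≤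
      Real.sqrt 2 * ∑ i ∈ Finset.range (K + 1),
        Real.sqrt (∑ j ∈ Finset.range (2 ^ (K - i) + 1),
          ‖∑ k ∈ Finset.Ico (j * 2 ^ i) (min ((j + 1) * 2 ^ i) (2 ^ K + 1)),
              (f (k + 1) - f k)‖ ^ 2) := by
  classical
  open RademacherMenshov in
  set S : ℕ → ℕ → ℂ := fun i j =>
    ∑ k ∈ Finset.Ico (j * 2 ^ i) (min ((j + 1) * 2 ^ i) (2 ^ K + 1)), (f (k + 1) - f k)
    with hS
  set J : ℕ → ℕ → Finset ℕ := fun i m =>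
    (range (2 ^ (K - i) + 1)).filter (fun j => RademacherMenshov.P (n m) (n (m + 1)) i j)
    with hJ
  set g : ℕ → ℕ → ℂ := fun i m => ∑ j ∈ J i m, S i j with hg
  have hmon : ∀ {p q : ℕ}, p ≤ q → q ≤ M → n p ≤ n q := fun {p q} hpq hq =>
    hmono.monotoneOn (Set.mem_Iic.mpr (le_trans hpq hq)) (Set.mem_Iic.mpr hq) hpq
  have hnm : ∀ m, m < M → n (m + 1) ≤ 2 ^ K := fun m hm =>
    le_trans (hmon hm le_rfl) hle
  have htrunc : ∀ i m, m < M → ∀ j ∈ J i m,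
      min ((j + 1) * 2 ^ i) (2 ^ K + 1) = (j + 1) * 2 ^ i := by
    intro i m hm j hj
    simp only [hJ, mem_filter] at hj
    exact Nat.min_eq_left (le_trans hj.2.2.1 (le_trans (hnm m hm) (by omega)))
  -- decomposition of each increment into maximal dyadic pieces
  have hdecomp : ∀ m, m < M →
      f (n (m + 1)) - f (n m) = ∑ i ∈ range (K + 1), g i m := by
    intro m hm
    have hab : n m ≤ n (m + 1) := hmon (by omega) hm
    have hpart := RademacherMenshov.partition (K := K) (a := n m) (b := n (m + 1))
      (hnm m hm) (fun k => f (k + 1) - f k)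
    have htel : ∑ k ∈ Ico (n m) (n (m + 1)), (f (k + 1) - f k)
        = f (n (m + 1)) - f (n m) := by
      rw [Finset.sum_Ico_eq_sub _ hab, Finset.sum_range_sub, Finset.sum_range_sub]
      ring
    rw [htel] at hpart
    rw [← hpart]
    refine Finset.sum_congr rfl fun i _ => ?_
    simp only [hg]
    refine Finset.sum_congr rfl fun j hj => ?_
    simp only [hS]
    rw [htrunc i m hm j hj]
  -- step 1: pointwise triangle inequality
  have step1 : Real.sqrt (∑ m ∈ range M, ‖f (n (m + 1)) - f (n m)‖ ^ 2)
      ≤ Real.sqrt (∑ m ∈ range M, (∑ i ∈ range (K + 1), ‖g i m‖) ^ 2) := by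
    apply Real.sqrt_le_sqrt
    refine Finset.sum_le_sum fun m hm => ?_
    refine pow_le_pow_left₀ (norm_nonneg _) ?_ 2
    rw [hdecomp m (mem_range.mp hm)]
    exact norm_sum_le _ _
  -- step 2: Minkowski
  have step2 := RademacherMenshov.minkowski M (range (K + 1)) (fun i m => ‖g i m‖)
  -- step 3: per-scale bound
  have step3 : ∀ i ∈ range (K + 1), ∑ m ∈ range M, ‖g i m‖ ^ 2
      ≤ 2 * ∑ j ∈ range (2 ^ (K - i) + 1), ‖S i j‖ ^ 2 := by
    intro i _
    have hdisj : (↑(range M) : Set ℕ).PairwiseDisjoint (J i) := by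
      have key : ∀ m m', m' < M → m < m' → Disjoint (J i m) (J i m') := by
        intro m m' hm' hmm'
        apply Finset.disjoint_left.mpr
        intro j hj hj'
        simp only [hJ, mem_filter] at hj hj'
        have h1 : (j + 1) * 2 ^ i ≤ n (m + 1) := hj.2.2.1
        have h2 : n m' ≤ j * 2 ^ i := hj'.2.1
        have h3 : n (m + 1) ≤ n m' := hmon hmm' (le_of_lt hm')
        have h4 : j * 2 ^ i < (j + 1) * 2 ^ i :=
          (Nat.mul_lt_mul_right (pow_pos two_pos i)).mpr (Nat.lt_succ_self j)
        omega
      intro m hm m' hm' hne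
      simp only [mem_coe, mem_range] at hm hm'
      rcases hne.lt_or_gt with h | h
      · exact key m m' hm' h
      · exact (key m' m hm h).symm
    have step_a : ∀ m, m < M → ‖g i m‖ ^ 2 ≤ 2 * ∑ j ∈ J i m, ‖S i j‖ ^ 2 := by
      intro m hm
      have h1 : ‖g i m‖ ≤ ∑ j ∈ J i m, ‖S i j‖ := norm_sum_le _ _
      have h2 : (∑ j ∈ J i m, ‖S i j‖) ^ 2
          ≤ ((J i m).card : ℝ) * ∑ j ∈ J i m, ‖S i j‖ ^ 2 := sq_sum_le_card_mul_sum_sq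
      have h3 : ((J i m).card : ℝ) ≤ 2 := by
        have := RademacherMenshov.card_le_two (n m) (n (m + 1)) i (2 ^ (K - i) + 1)
        exact_mod_cast this
      calc ‖g i m‖ ^ 2 ≤ (∑ j ∈ J i m, ‖S i j‖) ^ 2 := pow_le_pow_left₀ (norm_nonneg _) h1 2
        _ ≤ ((J i m).card : ℝ) * ∑ j ∈ J i m, ‖S i j‖ ^ 2 := h2
        _ ≤ 2 * ∑ j ∈ J i m, ‖S i j‖ ^ 2 :=
            mul_le_mul_of_nonneg_right h3 (Finset.sum_nonneg fun _ _ => sq_nonneg _)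
    calc ∑ m ∈ range M, ‖g i m‖ ^ 2
        ≤ ∑ m ∈ range M, 2 * ∑ j ∈ J i m, ‖S i j‖ ^ 2 :=
          Finset.sum_le_sum fun m hm => step_a m (mem_range.mp hm)
      _ = 2 * ∑ m ∈ range M, ∑ j ∈ J i m, ‖S i j‖ ^ 2 := by rw [Finset.mul_sum]
      _ ≤ 2 * ∑ j ∈ range (2 ^ (K - i) + 1), ‖S i j‖ ^ 2 := by
          refine mul_le_mul_of_nonneg_left ?_ (by norm_num)
          rw [← Finset.sum_biUnion hdisj]
          refine Finset.sum_le_sum_of_subset_of_nonneg ?_ fun _ _ _ => sq_nonneg _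
          intro j hj
          simp only [mem_biUnion] at hj
          obtain ⟨m, -, hj⟩ := hj
          simp only [hJ, mem_filter] at hj
          exact hj.1
  -- assemble
  calc Real.sqrt (∑ m ∈ range M, ‖f (n (m + 1)) - f (n m)‖ ^ 2)
      ≤ Real.sqrt (∑ m ∈ range M, (∑ i ∈ range (K + 1), ‖g i m‖) ^ 2) := step1
    _ ≤ ∑ i ∈ range (K + 1), Real.sqrt (∑ m ∈ range M, ‖g i m‖ ^ 2) := step2
    _ ≤ ∑ i ∈ range (K + 1),
          Real.sqrt (2 * ∑ j ∈ range (2 ^ (K - i) + 1), ‖S i j‖ ^ 2) :=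
        Finset.sum_le_sum fun i hi => Real.sqrt_le_sqrt (step3 i hi)
    _ = ∑ i ∈ range (K + 1),
          Real.sqrt 2 * Real.sqrt (∑ j ∈ range (2 ^ (K - i) + 1), ‖S i j‖ ^ 2) :=
        Finset.sum_congr rfl fun i _ => Real.sqrt_mul (by norm_num) _
    _ = Real.sqrt 2 * ∑ i ∈ range (K + 1),
          Real.sqrt (∑ j ∈ range (2 ^ (K - i) + 1), ‖S i j‖ ^ 2) :=
        (Finset.mul_sum _ _ _).symm
end

section
/- Let (𝔼_n)_{n∈ℤ} be a sequence of conditional expectation operators associated with an increasing filtration (ℱ_n)_{n∈ℤ} on a σ-finite measure space, and let f ∈ L²(X). Then for every N ∈ ℕ and every strictly increasing sequence I = (I_1 < ... < I_{N+1}) in ℤ, ‖ ( Σ_{j=1}^N sup_{I_j ≤ n < I_{j+1}} |𝔼_n f − 𝔼_{I_j} f|² )^{1/2} ‖_{L²(X)} ≤ C ‖f‖_{L²(X)} with a constant C independent of N, I, and f. -/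
open MeasureTheory
open scoped ENNReal

namespace OscAux

variable {X : Type*} {m m0 : MeasurableSpace X} {μ : Measure X}

lemma condexp_clm {E F : Type*} [NormedAddCommGroup E] [NormedSpace ℝ E] [CompleteSpace E]
    [NormedAddCommGroup F] [NormedSpace ℝ F] [CompleteSpace F]
    (hm : m ≤ m0) [SigmaFinite (μ.trim hm)]
    (T : E →L[ℝ] F) {f : X → E} (hf : Integrable f μ) :
    (fun x => T ((μ[f|m]) x)) =ᵐ[μ] μ[fun x => T (f x)|m] := by
  refine ae_eq_condExp_of_forall_setIntegral_eq hm (T.integrable_comp hf) ?_ ?_ ?_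
  · exact fun s _ _ => (T.integrable_comp integrable_condExp).integrableOn
  · intro s hs hμs
    rw [T.integral_comp_comm integrable_condExp.integrableOn,
      setIntegral_condExp hm hf hs, ← T.integral_comp_comm hf.integrableOn]
  · exact (T.continuous.comp_stronglyMeasurable
      (stronglyMeasurable_condExp (m := m))).aestronglyMeasurable

lemma memℒp_two_condexp (hm : m ≤ m0) [SigmaFinite (μ.trim hm)]
    {φ : X → ℝ} (hi : Integrable φ μ) (h2 : MemLp φ 2 μ) :
    MemLp (μ[φ|m]) 2 μ := by
  have key : (↑(condExpL2 ℝ ℝ hm (h2.toLp φ)) : X → ℝ) =ᵐ[μ] μ[φ|m] := by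
    refine ae_eq_condExp_of_forall_setIntegral_eq hm hi ?_ ?_ ?_
    · exact fun s _ hμs => integrableOn_condExpL2_of_measure_ne_top hm hμs.ne _
    · intro s hs hμs
      rw [integral_condExpL2_eq hm _ hs hμs.ne]
      exact setIntegral_congr_ae (hm s hs) ((h2.coeFn_toLp).mono fun x hx _ => hx)
    · exact aestronglyMeasurable_condExpL2 hm _
  exact (Lp.memLp _).ae_eq key

lemma integrable_mul_of_memℒp_two {g h : X → ℝ} (hg : MemLp g 2 μ) (hh : MemLp h 2 μ) :
    Integrable (fun x => g x * h x) μ := by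
  refine Integrable.mono' ((hg.integrable_sq).add (hh.integrable_sq))
    (hg.aestronglyMeasurable.mul hh.aestronglyMeasurable) ?_
  filter_upwards with x
  simp only [Pi.add_apply]
  rw [Real.norm_eq_abs, abs_mul]
  nlinarith [sq_nonneg (|g x| - |h x|), sq_abs (g x), sq_abs (h x), abs_nonneg (g x),
    abs_nonneg (h x), sq_nonneg (g x), sq_nonneg (h x)]


lemma integral_mul_eq_zero (hm : m ≤ m0) [SigmaFinite (μ.trim hm)]
    {g h : X → ℝ} (hgm : StronglyMeasurable[m] g) (hg2 : MemLp g 2 μ)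
    (hh : Integrable h μ) (hh2 : MemLp h 2 μ) (hcond : μ[h|m] =ᵐ[μ] 0) :
    ∫ x, g x * h x ∂μ = 0 := by
  have hgh : Integrable (fun x => g x * h x) μ := integrable_mul_of_memℒp_two hg2 hh2
  have hgh' : Integrable (g * h) μ := by simpa [Pi.mul_def] using hgh
  have hmul : μ[g * h|m] =ᵐ[μ] g * μ[h|m] := condExp_mul_of_stronglyMeasurable_left hgm hgh' hh
  have hz : μ[g * h|m] =ᵐ[μ] 0 := by
    refine hmul.trans ?_
    filter_upwards [hcond] with x hx
    simp only [Pi.mul_apply, Pi.zero_apply] at hx ⊢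
    rw [hx, mul_zero]
  calc ∫ x, g x * h x ∂μ = ∫ x, (g * h) x ∂μ := rfl
    _ = ∫ x, (μ[g * h|m]) x ∂μ := (integral_condExp hm).symm
    _ = 0 := by rw [integral_congr_ae hz]; simp

lemma pyth_core (hm : m ≤ m0) [SigmaFinite (μ.trim hm)] {ψ : X → ℝ}
    (hψi : Integrable ψ μ) (hψ2 : MemLp ψ 2 μ) :
    ∫ x, (ψ x - (μ[ψ|m]) x)^2 ∂μ + ∫ x, ((μ[ψ|m]) x)^2 ∂μ = ∫ x, (ψ x)^2 ∂μ := by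
  set g := μ[ψ|m] with hgdef
  have hgi : Integrable g μ := integrable_condExp
  have hg2 : MemLp g 2 μ := memℒp_two_condexp hm hψi hψ2
  have hd2 : MemLp (fun x => ψ x - g x) 2 μ := hψ2.sub hg2
  have hdi : Integrable (fun x => ψ x - g x) μ := hψi.sub hgi
  have hcond : μ[fun x => ψ x - g x|m] =ᵐ[μ] 0 := by
    have h1 : μ[ψ - g|m] =ᵐ[μ] μ[ψ|m] - μ[g|m] := condExp_sub hψi hgi m
    rw [condExp_of_stronglyMeasurable hm stronglyMeasurable_condExp hgi] at h1
    have h2 : μ[ψ|m] - g = 0 := by rw [← hgdef]; exact sub_self g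
    rw [h2] at h1
    exact h1
  have cross : ∫ x, g x * (ψ x - g x) ∂μ = 0 :=
    integral_mul_eq_zero hm stronglyMeasurable_condExp hg2 hdi hd2 hcond
  have hint1 : Integrable (fun x => (ψ x - g x)^2) μ := hd2.integrable_sq
  have hint2 : Integrable (fun x => 2 * (g x * (ψ x - g x))) μ :=
    (integrable_mul_of_memℒp_two hg2 hd2).const_mul 2
  have hint3 : Integrable (fun x => (g x)^2) μ := hg2.integrable_sq
  have hint23 : Integrable (fun x => 2 * (g x * (ψ x - g x)) + (g x)^2) μ := hint2.add hint3
  have expand : ∫ x, (ψ x)^2 ∂μ =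
      ∫ x, ((ψ x - g x)^2 + (2 * (g x * (ψ x - g x)) + (g x)^2)) ∂μ := by
    congr 1; funext x; ring
  rw [expand, integral_add hint1 hint23, integral_add hint2 hint3,
    integral_const_mul, cross, mul_zero, zero_add]


section Filtration

variable (ℱ : Filtration ℤ m0) [∀ n : ℤ, SigmaFinite (μ.trim (ℱ.le n))] {φ : X → ℝ}

lemma pyth_filt (hi : Integrable φ μ) (h2 : MemLp φ 2 μ) {a b : ℤ} (hab : a ≤ b) :
    ∫ x, ((μ[φ|ℱ b]) x - (μ[φ|ℱ a]) x)^2 ∂μ + ∫ x, ((μ[φ|ℱ a]) x)^2 ∂μ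
      = ∫ x, ((μ[φ|ℱ b]) x)^2 ∂μ := by
  have hbi : Integrable (μ[φ|ℱ b]) μ := integrable_condExp
  have hb2 : MemLp (μ[φ|ℱ b]) 2 μ := memℒp_two_condexp (ℱ.le b) hi h2
  have key := pyth_core (μ := μ) (ℱ.le a) hbi hb2
  have hcc : μ[μ[φ|ℱ b]|ℱ a] =ᵐ[μ] μ[φ|ℱ a] := condExp_condExp_of_le (ℱ.mono hab) (ℱ.le b)
  have e1 : ∫ x, ((μ[φ|ℱ b]) x - (μ[(μ[φ|ℱ b])|ℱ a]) x)^2 ∂μ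
      = ∫ x, ((μ[φ|ℱ b]) x - (μ[φ|ℱ a]) x)^2 ∂μ := by
    refine integral_congr_ae ?_
    filter_upwards [hcc] with x hx
    rw [hx]
  have e2 : ∫ x, ((μ[(μ[φ|ℱ b])|ℱ a]) x)^2 ∂μ = ∫ x, ((μ[φ|ℱ a]) x)^2 ∂μ := by
    refine integral_congr_ae ?_
    filter_upwards [hcc] with x hx
    rw [hx]
  rw [← e1, ← e2]
  exact key

lemma sq_int_mono (hi : Integrable φ μ) (h2 : MemLp φ 2 μ) {a b : ℤ} (hab : a ≤ b) :
    ∫ x, ((μ[φ|ℱ a]) x)^2 ∂μ ≤ ∫ x, ((μ[φ|ℱ b]) x)^2 ∂μ := by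
  have key := pyth_filt ℱ hi h2 hab
  have h0 : 0 ≤ ∫ x, ((μ[φ|ℱ b]) x - (μ[φ|ℱ a]) x)^2 ∂μ :=
    integral_nonneg fun x => sq_nonneg _
  linarith

lemma sq_int_le (hi : Integrable φ μ) (h2 : MemLp φ 2 μ) (c : ℤ) :
    ∫ x, ((μ[φ|ℱ c]) x)^2 ∂μ ≤ ∫ x, (φ x)^2 ∂μ := by
  have key := pyth_core (μ := μ) (ℱ.le c) hi h2
  have h0 : 0 ≤ ∫ x, (φ x - (μ[φ|ℱ c]) x)^2 ∂μ := integral_nonneg fun x => sq_nonneg _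
  linarith

lemma diff_sq_eq (hi : Integrable φ μ) (h2 : MemLp φ 2 μ) {a b : ℤ} (hab : a ≤ b) :
    ∫ x, ((μ[φ|ℱ b]) x - (μ[φ|ℱ a]) x)^2 ∂μ
      = ∫ x, ((μ[φ|ℱ b]) x)^2 ∂μ - ∫ x, ((μ[φ|ℱ a]) x)^2 ∂μ := by
  have key := pyth_filt ℱ hi h2 hab
  linarith

lemma telescope (hi : Integrable φ μ) (h2 : MemLp φ 2 μ) (N : ℕ) (I : ℕ → ℤ)
    (hI : StrictMonoOn I (Set.Iic N)) :
    ∑ j ∈ Finset.range N, ∫ x, ((μ[φ|ℱ (I (j+1) - 1)]) x - (μ[φ|ℱ (I j)]) x)^2 ∂μ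
      ≤ ∫ x, (φ x)^2 ∂μ := by
  have main : ∀ K : ℕ, K ≤ N →
      ∑ j ∈ Finset.range K, ∫ x, ((μ[φ|ℱ (I (j+1) - 1)]) x - (μ[φ|ℱ (I j)]) x)^2 ∂μ
        ≤ ∫ x, ((μ[φ|ℱ (I K)]) x)^2 ∂μ - ∫ x, ((μ[φ|ℱ (I 0)]) x)^2 ∂μ := by
    intro K
    induction K with
    | zero => intro _; simp
    | succ K ih =>
      intro hKN
      have hKN' : K ≤ N := Nat.le_of_succ_le hKN
      have hlt : I K < I (K + 1) :=
        hI (Set.mem_Iic.2 hKN') (Set.mem_Iic.2 hKN) (Nat.lt_succ_self K)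
      have hle1 : I K ≤ I (K + 1) - 1 := by omega
      have hterm := diff_sq_eq ℱ hi h2 (a := I K) (b := I (K+1) - 1) hle1
      have hmono := sq_int_mono ℱ hi h2 (a := I (K+1) - 1) (b := I (K+1)) (by omega)
      rw [Finset.sum_range_succ, hterm]
      have := ih hKN'
      linarith
  have h1 := main N le_rfl
  have h2' := sq_int_le ℱ hi h2 (I N)
  have h3 : 0 ≤ ∫ x, ((μ[φ|ℱ (I 0)]) x)^2 ∂μ := integral_nonneg fun x => sq_nonneg _
  linarith


lemma psi_sm {a n : ℤ} (han : a ≤ n) :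
    StronglyMeasurable[ℱ n] (fun x => (μ[φ|ℱ n]) x - (μ[φ|ℱ a]) x) :=
  stronglyMeasurable_condExp.sub (stronglyMeasurable_condExp.mono (ℱ.mono han))

lemma psi_mart (hi : Integrable φ μ) {a n c : ℤ} (han : a ≤ n) (hnc : n ≤ c) :
    μ[fun x => (μ[φ|ℱ c]) x - (μ[φ|ℱ a]) x|ℱ n]
      =ᵐ[μ] fun x => (μ[φ|ℱ n]) x - (μ[φ|ℱ a]) x := by
  have h1 : μ[(μ[φ|ℱ c]) - (μ[φ|ℱ a])|ℱ n]
      =ᵐ[μ] μ[μ[φ|ℱ c]|ℱ n] - μ[μ[φ|ℱ a]|ℱ n] :=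
    condExp_sub integrable_condExp integrable_condExp _
  have h2 : μ[μ[φ|ℱ c]|ℱ n] =ᵐ[μ] μ[φ|ℱ n] := condExp_condExp_of_le (ℱ.mono hnc) (ℱ.le c)
  have h3 : μ[μ[φ|ℱ a]|ℱ n] = μ[φ|ℱ a] :=
    condExp_of_stronglyMeasurable (ℱ.le n)
      (stronglyMeasurable_condExp.mono (ℱ.mono han)) integrable_condExp
  rw [h3] at h1
  refine h1.trans ?_
  filter_upwards [h2] with x hx
  simp only [Pi.sub_apply]
  rw [hx]

lemma psi_submart (hi : Integrable φ μ) {a n c : ℤ} (han : a ≤ n) (hnc : n ≤ c) :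
    ∀ᵐ x ∂μ, |(μ[φ|ℱ n]) x - (μ[φ|ℱ a]) x|
      ≤ (μ[(fun y => |(μ[φ|ℱ c]) y - (μ[φ|ℱ a]) y|)|ℱ n]) x := by
  have hψi : Integrable (fun y => (μ[φ|ℱ c]) y - (μ[φ|ℱ a]) y) μ :=
    integrable_condExp.sub integrable_condExp
  have habs : Integrable (fun y => |(μ[φ|ℱ c]) y - (μ[φ|ℱ a]) y|) μ := hψi.abs
  have hmart := psi_mart ℱ hi han hnc
  have hplus : μ[fun y => (μ[φ|ℱ c]) y - (μ[φ|ℱ a]) y|ℱ n]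
      ≤ᵐ[μ] μ[(fun y => |(μ[φ|ℱ c]) y - (μ[φ|ℱ a]) y|)|ℱ n] :=
    condExp_mono hψi habs (Filter.Eventually.of_forall fun y => le_abs_self _)
  have hneg : μ[fun y => -((μ[φ|ℱ c]) y - (μ[φ|ℱ a]) y)|ℱ n]
      ≤ᵐ[μ] μ[(fun y => |(μ[φ|ℱ c]) y - (μ[φ|ℱ a]) y|)|ℱ n] :=
    condExp_mono hψi.neg habs (Filter.Eventually.of_forall fun y => neg_le_abs _)
  have hneg' : μ[fun y => -((μ[φ|ℱ c]) y - (μ[φ|ℱ a]) y)|ℱ n]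
      =ᵐ[μ] -μ[fun y => (μ[φ|ℱ c]) y - (μ[φ|ℱ a]) y|ℱ n] := condExp_neg _ _
  filter_upwards [hmart, hplus, hneg, hneg'] with x h1 h2 h3 h4
  rw [abs_le]
  simp only [Pi.neg_apply] at h4
  constructor
  · rw [← h1]; linarith [h2, h3, h4]
  · rw [← h1]; exact h2
  
lemma doob_weak (hi : Integrable φ μ) {a b : ℤ} (hab : a < b) {t : ℝ} (ht : 0 < t) :
    ENNReal.ofReal t * μ {x | t ≤ (Finset.Ico a b).sup' (Finset.nonempty_Ico.2 hab)
        (fun n => |(μ[φ|ℱ n]) x - (μ[φ|ℱ a]) x|)}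
    ≤ ∫⁻ x in {x | t ≤ (Finset.Ico a b).sup' (Finset.nonempty_Ico.2 hab)
        (fun n => |(μ[φ|ℱ n]) x - (μ[φ|ℱ a]) x|)},
        ENNReal.ofReal |(μ[φ|ℱ (b-1)]) x - (μ[φ|ℱ a]) x| ∂μ := by
  have hu_meas : ∀ n, a ≤ n → Measurable[ℱ n]
      (fun x => |(μ[φ|ℱ n]) x - (μ[φ|ℱ a]) x|) :=
    fun n han => continuous_abs.measurable.comp (psi_sm ℱ han).measurable
  set u : ℤ → X → ℝ := fun n x => |(μ[φ|ℱ n]) x - (μ[φ|ℱ a]) x| with hu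
  set E : Set X := {x | t ≤ (Finset.Ico a b).sup' (Finset.nonempty_Ico.2 hab)
      (fun n => u n x)} with hE
  set A : ℤ → Set X := fun n => {x | t ≤ u n x} ∩ ⋂ i, ⋂ (_ : i ∈ Finset.Ico a n),
      {x | u i x < t} with hA
  have hA_meas : ∀ n ∈ Finset.Ico a b, MeasurableSet[ℱ n] (A n) := by
    intro n hn
    rw [Finset.mem_Ico] at hn
    refine MeasurableSet.inter ?_ ?_
    · exact measurableSet_le measurable_const (hu_meas n hn.1)
    · refine MeasurableSet.iInter fun i => MeasurableSet.iInter fun hi => ?_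
      rw [Finset.mem_Ico] at hi
      exact measurableSet_lt ((hu_meas i hi.1).mono (ℱ.mono hi.2.le) le_rfl) measurable_const
  have hA_meas0 : ∀ n ∈ Finset.Ico a b, MeasurableSet (A n) :=
    fun n hn => (ℱ.le n) _ (hA_meas n hn)
  have hdisj_aux : ∀ i j : ℤ, a ≤ i → i < j → Disjoint (A i) (A j) := by
    intro i j hai hij
    rw [Set.disjoint_left]
    intro x hxi hxj
    have h1 : t ≤ u i x := hxi.1
    have h2 : u i x < t := by
      have := hxj.2
      rw [Set.mem_iInter] at this
      have := this i
      rw [Set.mem_iInter] at this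
      exact this (Finset.mem_Ico.2 ⟨hai, hij⟩)
    linarith
  have hdisj : Set.PairwiseDisjoint ↑(Finset.Ico a b) A := by
    intro i hi j hj hij
    rw [Finset.coe_Ico, Set.mem_Ico] at hi hj
    rcases lt_or_gt_of_ne hij with h | h
    · exact hdisj_aux i j hi.1 h
    · exact (hdisj_aux j i hj.1 h).symm
  have hEeq : E = ⋃ n ∈ Finset.Ico a b, A n := by
    ext x
    simp only [hE, Set.mem_setOf_eq, Set.mem_iUnion]
    constructor
    · intro hx
      have hex : ∃ n ∈ Finset.Ico a b, t ≤ u n x := Finset.le_sup'_iff _ |>.1 hx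
      classical
      set fs : Finset ℤ := (Finset.Ico a b).filter (fun n => t ≤ u n x) with hfs
      have hfs_ne : fs.Nonempty := by
        obtain ⟨n, hn, htn⟩ := hex
        exact ⟨n, Finset.mem_filter.2 ⟨hn, htn⟩⟩
      set n₀ := fs.min' hfs_ne with hn₀
      have hn₀_mem : n₀ ∈ fs := Finset.min'_mem fs hfs_ne
      have hn₀_Ico : n₀ ∈ Finset.Ico a b := (Finset.mem_filter.1 hn₀_mem).1
      refine ⟨n₀, hn₀_Ico, (Finset.mem_filter.1 hn₀_mem).2, ?_⟩
      rw [Set.mem_iInter]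
      intro i
      rw [Set.mem_iInter]
      intro hi
      rw [Finset.mem_Ico] at hi
      simp only [Set.mem_setOf_eq]
      by_contra hcon
      push_neg at hcon
      have hiIco : i ∈ Finset.Ico a b := by
        rw [Finset.mem_Ico]
        rw [Finset.mem_Ico] at hn₀_Ico
        exact ⟨hi.1, lt_trans hi.2 hn₀_Ico.2⟩
      have : n₀ ≤ i := Finset.min'_le fs i (Finset.mem_filter.2 ⟨hiIco, hcon⟩)
      exact absurd hi.2 (not_lt.2 this)
    · rintro ⟨n, hn, hxn⟩
      exact le_trans hxn.1 (Finset.le_sup' (fun n => u n x) hn)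
  have habs : Integrable (u (b-1)) μ := (integrable_condExp.sub integrable_condExp).abs
  have step : ∀ n ∈ Finset.Ico a b,
      ENNReal.ofReal t * μ (A n) ≤ ∫⁻ x in A n, ENNReal.ofReal (u (b-1) x) ∂μ := by
    intro n hn
    have hn' := Finset.mem_Ico.1 hn
    have hnb1 : n ≤ b - 1 := by omega
    calc ENNReal.ofReal t * μ (A n) = ∫⁻ _ in A n, ENNReal.ofReal t ∂μ :=
          (setLIntegral_const _ _).symm
      _ ≤ ∫⁻ x in A n, ENNReal.ofReal (u n x) ∂μ := by
          refine lintegral_mono_ae ?_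
          refine (ae_restrict_iff' (hA_meas0 n hn)).2 ?_
          filter_upwards with x hx
          exact ENNReal.ofReal_le_ofReal hx.1
      _ ≤ ∫⁻ x in A n, ENNReal.ofReal ((μ[u (b-1)|ℱ n]) x) ∂μ := by
          refine lintegral_mono_ae (ae_restrict_of_ae ?_)
          filter_upwards [psi_submart ℱ hi hn'.1 hnb1] with x hx
          exact ENNReal.ofReal_le_ofReal hx
      _ = ENNReal.ofReal (∫ x in A n, (μ[u (b-1)|ℱ n]) x ∂μ) :=
          (ofReal_integral_eq_lintegral_ofReal integrable_condExp.integrableOn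
            (ae_restrict_of_ae (condExp_nonneg
              (Filter.Eventually.of_forall fun y => abs_nonneg _)))).symm
      _ = ENNReal.ofReal (∫ x in A n, u (b-1) x ∂μ) := by
          rw [setIntegral_condExp (ℱ.le n) habs (hA_meas n hn)]
      _ = ∫⁻ x in A n, ENNReal.ofReal (u (b-1) x) ∂μ :=
          ofReal_integral_eq_lintegral_ofReal habs.integrableOn
            (ae_restrict_of_ae (Filter.Eventually.of_forall fun y => abs_nonneg _))
  calc ENNReal.ofReal t * μ E = ∑ n ∈ Finset.Ico a b, ENNReal.ofReal t * μ (A n) := by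
        rw [hEeq, measure_biUnion_finset hdisj hA_meas0, Finset.mul_sum]
    _ ≤ ∑ n ∈ Finset.Ico a b, ∫⁻ x in A n, ENNReal.ofReal (u (b-1) x) ∂μ :=
        Finset.sum_le_sum step
    _ = ∫⁻ x in E, ENNReal.ofReal (u (b-1) x) ∂μ := by
        rw [hEeq, lintegral_biUnion_finset hdisj hA_meas0]


lemma doob (hi : Integrable φ μ) (h2 : MemLp φ 2 μ) {a b : ℤ} (hab : a < b) :
    ∫⁻ x, ENNReal.ofReal (((Finset.Ico a b).sup' (Finset.nonempty_Ico.2 hab)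
        (fun n => |(μ[φ|ℱ n]) x - (μ[φ|ℱ a]) x|)) ^ 2) ∂μ
      ≤ 4 * ∫⁻ x, ENNReal.ofReal (|(μ[φ|ℱ (b-1)]) x - (μ[φ|ℱ a]) x| ^ 2) ∂μ := by
  have hu_meas : ∀ n, a ≤ n → Measurable (fun x => |(μ[φ|ℱ n]) x - (μ[φ|ℱ a]) x|) :=
    fun n han => continuous_abs.measurable.comp
      ((psi_sm ℱ han).measurable.mono (ℱ.le n) le_rfl)
  set v : X → ℝ := fun x => |(μ[φ|ℱ (b-1)]) x - (μ[φ|ℱ a]) x| with hv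
  set M : X → ℝ := fun x => (Finset.Ico a b).sup' (Finset.nonempty_Ico.2 hab)
      (fun n => |(μ[φ|ℱ n]) x - (μ[φ|ℱ a]) x|) with hM
  have hM_meas : Measurable M := by
    have h : Measurable ((Finset.Ico a b).sup' (Finset.nonempty_Ico.2 hab)
        (fun n x => |(μ[φ|ℱ n]) x - (μ[φ|ℱ a]) x|)) :=
      Finset.measurable_sup' _ (fun n hn => hu_meas n (Finset.mem_Ico.1 hn).1)
    have he : M = (Finset.Ico a b).sup' (Finset.nonempty_Ico.2 hab)
        (fun n x => |(μ[φ|ℱ n]) x - (μ[φ|ℱ a]) x|) := by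
      funext x
      rw [hM, Finset.sup'_apply]
    rw [he]
    exact h
  have hv_meas : Measurable v := hu_meas (b-1) (by omega)
  have hM_nn : ∀ x, 0 ≤ M x := fun x => by
    simp only [hM]
    exact le_trans (abs_nonneg ((μ[φ|ℱ a]) x - (μ[φ|ℱ a]) x))
      (Finset.le_sup' (fun n => |(μ[φ|ℱ n]) x - (μ[φ|ℱ a]) x|)
        (Finset.mem_Ico.2 ⟨le_refl a, hab⟩))
  have hv_nn : ∀ x, 0 ≤ v x := fun x => abs_nonneg _
  have hψ2 : ∀ n : ℤ, MemLp (fun x => (μ[φ|ℱ n]) x - (μ[φ|ℱ a]) x) 2 μ := fun n =>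
    (memℒp_two_condexp (ℱ.le n) hi h2).sub (memℒp_two_condexp (ℱ.le a) hi h2)
  have hsq_fin : ∀ n : ℤ, ∫⁻ x, ENNReal.ofReal (|(μ[φ|ℱ n]) x - (μ[φ|ℱ a]) x| ^ 2) ∂μ < ⊤ := by
    intro n
    have hint : Integrable (fun x => ((μ[φ|ℱ n]) x - (μ[φ|ℱ a]) x) ^ 2) μ :=
      (hψ2 n).integrable_sq
    have hfin := (hasFiniteIntegral_iff_ofReal
      (Filter.Eventually.of_forall fun x => sq_nonneg _)).1 hint.hasFiniteIntegral
    simpa [sq_abs] using hfin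
  set A := ∫⁻ x, ENNReal.ofReal (M x ^ 2) ∂μ with hA
  set B := ∫⁻ x, ENNReal.ofReal (v x ^ 2) ∂μ with hB
  have hBfin : B < ⊤ := hsq_fin (b-1)
  have hAfin : A < ⊤ := by
    calc A ≤ ∫⁻ x, ∑ n ∈ Finset.Ico a b,
          ENNReal.ofReal (|(μ[φ|ℱ n]) x - (μ[φ|ℱ a]) x| ^ 2) ∂μ := by
          refine lintegral_mono fun x => ?_
          obtain ⟨n₁, hn₁, hMx⟩ := Finset.exists_mem_eq_sup' (Finset.nonempty_Ico.2 hab)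
            (fun n => |(μ[φ|ℱ n]) x - (μ[φ|ℱ a]) x|)
          show ENNReal.ofReal ((Finset.Ico a b).sup' (Finset.nonempty_Ico.2 hab)
            (fun n => |(μ[φ|ℱ n]) x - (μ[φ|ℱ a]) x|) ^ 2) ≤ _
          rw [hMx]
          exact Finset.single_le_sum
            (f := fun n => ENNReal.ofReal (|(μ[φ|ℱ n]) x - (μ[φ|ℱ a]) x| ^ 2))
            (fun i _ => zero_le) hn₁
      _ = ∑ n ∈ Finset.Ico a b,
            ∫⁻ x, ENNReal.ofReal (|(μ[φ|ℱ n]) x - (μ[φ|ℱ a]) x| ^ 2) ∂μ :=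
          lintegral_finset_sum _ (fun n hn =>
            (((hu_meas n (Finset.mem_Ico.1 hn).1).pow_const 2)).ennreal_ofReal)
      _ < ⊤ := by
          refine ENNReal.sum_lt_top.2 fun n hn => (hsq_fin n)
  have hpow2 : ∀ y : ℝ, y ^ (2:ℝ) = y ^ 2 := fun y => by
    rw [show (2:ℝ) = ((2:ℕ):ℝ) by norm_num, Real.rpow_natCast]
  have layer : A = ENNReal.ofReal 2
      * ∫⁻ t in Set.Ioi (0:ℝ), μ {x | t ≤ M x} * ENNReal.ofReal t := by
    have h := lintegral_rpow_eq_lintegral_meas_le_mul μ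
      (Filter.Eventually.of_forall hM_nn) hM_meas.aemeasurable (p := 2) two_pos
    simp only [hpow2, show (2:ℝ) - 1 = 1 by norm_num, Real.rpow_one] at h
    rw [hA, h]
  set ν := μ.withDensity (fun x => ENNReal.ofReal (v x)) with hν
  have hνs : ∀ t : ℝ, ν {x | t ≤ M x} = ∫⁻ x in {x | t ≤ M x}, ENNReal.ofReal (v x) ∂μ :=
    fun t => withDensity_apply _ (measurableSet_le measurable_const hM_meas)
  have step2 : (∫⁻ t in Set.Ioi (0:ℝ), μ {x | t ≤ M x} * ENNReal.ofReal t)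
      ≤ ∫⁻ t in Set.Ioi (0:ℝ), ν {x | t ≤ M x} := by
    refine lintegral_mono_ae ((ae_restrict_iff' measurableSet_Ioi).2 ?_)
    filter_upwards with t ht
    rw [mul_comm, hνs]
    exact doob_weak ℱ hi hab ht
  have step3 : (∫⁻ t in Set.Ioi (0:ℝ), ν {x | t ≤ M x}) = ∫⁻ x, ENNReal.ofReal (M x) ∂ν :=
    (lintegral_eq_lintegral_meas_le ν (Filter.Eventually.of_forall hM_nn)
      hM_meas.aemeasurable).symm
  have step4 : (∫⁻ x, ENNReal.ofReal (M x) ∂ν)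
      = ∫⁻ x, ENNReal.ofReal (v x) * ENNReal.ofReal (M x) ∂μ := by
    rw [hν, lintegral_withDensity_eq_lintegral_mul μ hv_meas.ennreal_ofReal
      hM_meas.ennreal_ofReal]
    rfl
  have step5 : (∫⁻ x, ENNReal.ofReal (v x) * ENNReal.ofReal (M x) ∂μ)
      ≤ B ^ (1/2:ℝ) * A ^ (1/2:ℝ) := by
    have h := ENNReal.lintegral_mul_le_Lp_mul_Lq μ
      Real.HolderConjugate.two_two
      hv_meas.ennreal_ofReal.aemeasurable hM_meas.ennreal_ofReal.aemeasurable
    simp only [Pi.mul_apply] at h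
    have hBeq : (∫⁻ x, ENNReal.ofReal (v x) ^ (2:ℝ) ∂μ) = B := by
      refine lintegral_congr fun x => ?_
      rw [ENNReal.ofReal_rpow_of_nonneg (hv_nn x) (by norm_num : (0:ℝ) ≤ 2), hpow2]
    have hAeq : (∫⁻ x, ENNReal.ofReal (M x) ^ (2:ℝ) ∂μ) = A := by
      refine lintegral_congr fun x => ?_
      rw [ENNReal.ofReal_rpow_of_nonneg (hM_nn x) (by norm_num : (0:ℝ) ≤ 2), hpow2]
    rw [← hBeq, ← hAeq]
    exact h
  have hkey : A ≤ 2 * (B ^ (1/2:ℝ) * A ^ (1/2:ℝ)) := by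
    conv_lhs => rw [layer]
    have h2' : (ENNReal.ofReal 2) = 2 := by
      simp [ENNReal.ofReal_ofNat]
    rw [h2']
    exact mul_le_mul_right (le_trans step2 (le_trans (le_of_eq step3)
      (le_trans (le_of_eq step4) step5))) 2
  -- conclude A ≤ 4 * B
  rcases eq_or_ne A 0 with hA0 | hA0
  · rw [hA0]
    exact zero_le
  have hA12_ne0 : A ^ (1/2:ℝ) ≠ 0 := by
    simp only [ne_eq, ENNReal.rpow_eq_zero_iff, not_or]
    constructor
    · rintro ⟨h, _⟩; exact hA0 h
    · rintro ⟨h, _⟩; exact absurd h hAfin.ne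
  have hA12_fin : A ^ (1/2:ℝ) ≠ ⊤ := by
    refine ENNReal.rpow_ne_top_of_nonneg (by norm_num) hAfin.ne
  have hAsplit : A = A ^ (1/2:ℝ) * A ^ (1/2:ℝ) := by
    rw [← ENNReal.rpow_add _ _ hA0 hAfin.ne]
    norm_num
  have hcancel : A ^ (1/2:ℝ) ≤ 2 * B ^ (1/2:ℝ) := by
    have h' : A ^ (1/2:ℝ) * A ^ (1/2:ℝ) ≤ (2 * B ^ (1/2:ℝ)) * A ^ (1/2:ℝ) := by
      calc A ^ (1/2:ℝ) * A ^ (1/2:ℝ) = A := hAsplit.symm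
        _ ≤ 2 * (B ^ (1/2:ℝ) * A ^ (1/2:ℝ)) := hkey
        _ = (2 * B ^ (1/2:ℝ)) * A ^ (1/2:ℝ) := by ring
    exact (ENNReal.mul_le_mul_iff_left hA12_ne0 hA12_fin).1 h'
  calc A = A ^ (1/2:ℝ) * A ^ (1/2:ℝ) := hAsplit
    _ ≤ (2 * B ^ (1/2:ℝ)) * (2 * B ^ (1/2:ℝ)) := mul_le_mul' hcancel hcancel
    _ = 4 * (B ^ (1/2:ℝ) * B ^ (1/2:ℝ)) := by ring
    _ = 4 * B := by
        congr 1
        rcases eq_or_ne B 0 with hB0 | hB0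
        · rw [hB0]
          simp
        · rw [← ENNReal.rpow_add _ _ hB0 hBfin.ne]
          norm_num


lemma sup'_meas (c : ℤ) (s : Finset ℤ) (hs : s.Nonempty) :
    Measurable (fun x => s.sup' hs (fun n => |(μ[φ|ℱ n]) x - (μ[φ|ℱ c]) x|)) := by
  have h : Measurable (s.sup' hs (fun n x => |(μ[φ|ℱ n]) x - (μ[φ|ℱ c]) x|)) :=
    Finset.measurable_sup' _ (fun n hn => continuous_abs.measurable.comp
      (((stronglyMeasurable_condExp.mono (ℱ.le n)).measurable).sub
       ((stronglyMeasurable_condExp.mono (ℱ.le c)).measurable)))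
  have he : (fun x => s.sup' hs (fun n => |(μ[φ|ℱ n]) x - (μ[φ|ℱ c]) x|))
      = s.sup' hs (fun n x => |(μ[φ|ℱ n]) x - (μ[φ|ℱ c]) x|) := by
    funext x
    rw [Finset.sup'_apply]
  rw [he]
  exact h

end Filtration

end OscAux


open OscAux in
/-- The `L²` oscillation inequality for martingales: for conditional expectations
`𝔼_n = 𝔼[·|ℱ_n]` along an increasing filtration indexed by `ℤ` on a σ-finite measure
space, `‖(Σ_{j<N} sup_{I j ≤ n < I (j+1)} |𝔼_n f − 𝔼_{I j} f|²)^{1/2}‖_{L²} ≤ C ‖f‖_{L²}`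
with `C` independent of `N`, `I` and `f`. -/
theorem martingale_oscillation_L2 {X : Type*} {m0 : MeasurableSpace X} (μ : Measure X)
    [SigmaFinite μ] (ℱ : Filtration ℤ m0) [∀ n : ℤ, SigmaFinite (μ.trim (ℱ.le n))] :
    ∃ C > 0, ∀ (f : X → ℂ), MemLp f 2 μ → ∀ (N : ℕ) (I : ℕ → ℤ),
      StrictMonoOn I (Set.Iic N) →
      eLpNorm (fun x => Real.sqrt (∑ j ∈ Finset.range N,
          (⨆ n ∈ Set.Ico (I j) (I (j + 1)),
            ‖(μ[f|ℱ n]) x - (μ[f|ℱ (I j)]) x‖) ^ 2)) 2 μ ≤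
        ENNReal.ofReal C * eLpNorm f 2 μ := by
  classical
  refine ⟨3, by norm_num, ?_⟩
  intro f hf2 N I hI
  by_cases hfi : Integrable f μ
  case neg =>
    have hz : ∀ n : ℤ, μ[f|ℱ n] = 0 := fun n => condExp_of_not_integrable hfi
    have heq : (fun x => Real.sqrt (∑ j ∈ Finset.range N,
        (⨆ n ∈ Set.Ico (I j) (I (j + 1)),
          ‖(μ[f|ℱ n]) x - (μ[f|ℱ (I j)]) x‖) ^ 2)) = fun _ => (0:ℝ) := by
      funext x
      have hosc : ∀ j : ℕ, (⨆ n ∈ Set.Ico (I j) (I (j + 1)),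
          ‖(μ[f|ℱ n]) x - (μ[f|ℱ (I j)]) x‖) = 0 := by
        intro j
        refine le_antisymm
          (Real.iSup_le (fun n => Real.iSup_le (fun _ => by simp [hz]) le_rfl) le_rfl)
          (Real.iSup_nonneg fun n => Real.iSup_nonneg fun _ => norm_nonneg _)
      have h0 : ∀ j ∈ Finset.range N, (⨆ n ∈ Set.Ico (I j) (I (j + 1)),
          ‖(μ[f|ℱ n]) x - (μ[f|ℱ (I j)]) x‖) ^ 2 = 0 := fun j _ => by
        rw [hosc j]
        exact zero_pow two_ne_zero
      rw [Finset.sum_congr rfl h0, Finset.sum_const_zero, Real.sqrt_zero]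
    rw [heq, eLpNorm_zero']
    exact zero_le
  case pos =>
  set φ : X → ℝ := fun x => (f x).re with hφdef
  set χ : X → ℝ := fun x => (f x).im with hχdef
  have hφi : Integrable φ μ := by
    have h := Complex.reCLM.integrable_comp hfi
    simpa using h
  have hχi : Integrable χ μ := by
    have h := Complex.imCLM.integrable_comp hfi
    simpa using h
  have hφ2 : MemLp φ 2 μ := by
    have h := Complex.reCLM.comp_memLp' hf2
    exact h
  have hχ2 : MemLp χ 2 μ := by
    have h := Complex.imCLM.comp_memLp' hf2
    exact h
  have hre : ∀ n : ℤ, (fun x => ((μ[f|ℱ n]) x).re) =ᵐ[μ] μ[φ|ℱ n] := by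
    intro n
    have h := condexp_clm (μ := μ) (ℱ.le n) Complex.reCLM hfi
    simpa using h
  have him : ∀ n : ℤ, (fun x => ((μ[f|ℱ n]) x).im) =ᵐ[μ] μ[χ|ℱ n] := by
    intro n
    have h := condexp_clm (μ := μ) (ℱ.le n) Complex.imCLM hfi
    simpa using h
  have hae : ∀ᵐ x ∂μ, ∀ n : ℤ,
      ((μ[f|ℱ n]) x).re = (μ[φ|ℱ n]) x ∧ ((μ[f|ℱ n]) x).im = (μ[χ|ℱ n]) x := by
    rw [ae_all_iff]
    intro n
    filter_upwards [hre n, him n] with x h1 h2 using ⟨h1, h2⟩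
  have hIlt : ∀ j, j < N → I j < I (j + 1) := fun j hj =>
    hI (Set.mem_Iic.2 (le_of_lt hj)) (Set.mem_Iic.2 hj) (Nat.lt_succ_self j)
  set K : ℕ → Finset ℤ := fun j => insert (I j) (Finset.Ico (I j) (I (j + 1))) with hKdef
  have hKne : ∀ j, (K j).Nonempty := fun j => Finset.insert_nonempty _ _
  have hKeq : ∀ j, j < N → K j = Finset.Ico (I j) (I (j + 1)) := fun j hj =>
    Finset.insert_eq_self.2 (Finset.mem_Ico.2 ⟨le_refl _, hIlt j hj⟩)
  set Sφ : ℕ → X → ℝ := fun j x => (K j).sup' (hKne j)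
      (fun n => |(μ[φ|ℱ n]) x - (μ[φ|ℱ (I j)]) x|) with hSφdef
  set Sχ : ℕ → X → ℝ := fun j x => (K j).sup' (hKne j)
      (fun n => |(μ[χ|ℱ n]) x - (μ[χ|ℱ (I j)]) x|) with hSχdef
  have hSφ_meas : ∀ j, Measurable (Sφ j) := fun j => sup'_meas ℱ (I j) (K j) (hKne j)
  have hSχ_meas : ∀ j, Measurable (Sχ j) := fun j => sup'_meas ℱ (I j) (K j) (hKne j)
  have hSφ_nn : ∀ j x, 0 ≤ Sφ j x := fun j x => by
    simp only [hSφdef]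
    exact le_trans (abs_nonneg ((μ[φ|ℱ (I j)]) x - (μ[φ|ℱ (I j)]) x))
      (Finset.le_sup' (fun n => |(μ[φ|ℱ n]) x - (μ[φ|ℱ (I j)]) x|)
        (Finset.mem_insert_self _ _))
  have hSχ_nn : ∀ j x, 0 ≤ Sχ j x := fun j x => by
    simp only [hSχdef]
    exact le_trans (abs_nonneg ((μ[χ|ℱ (I j)]) x - (μ[χ|ℱ (I j)]) x))
      (Finset.le_sup' (fun n => |(μ[χ|ℱ n]) x - (μ[χ|ℱ (I j)]) x|)
        (Finset.mem_insert_self _ _))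
  -- pointwise bound
  have hpoint : ∀ᵐ x ∂μ, ENNReal.ofReal (∑ j ∈ Finset.range N,
      (⨆ n ∈ Set.Ico (I j) (I (j + 1)), ‖(μ[f|ℱ n]) x - (μ[f|ℱ (I j)]) x‖) ^ 2)
      ≤ ∑ j ∈ Finset.range N,
        (2 * ENNReal.ofReal (Sφ j x ^ 2) + 2 * ENNReal.ofReal (Sχ j x ^ 2)) := by
    filter_upwards [hae] with x hx
    have hsum : (∑ j ∈ Finset.range N,
        (⨆ n ∈ Set.Ico (I j) (I (j + 1)), ‖(μ[f|ℱ n]) x - (μ[f|ℱ (I j)]) x‖) ^ 2)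
        ≤ ∑ j ∈ Finset.range N, (2 * Sφ j x ^ 2 + 2 * Sχ j x ^ 2) := by
      refine Finset.sum_le_sum fun j _ => ?_
      have hosc_nn : 0 ≤ ⨆ n ∈ Set.Ico (I j) (I (j + 1)),
          ‖(μ[f|ℱ n]) x - (μ[f|ℱ (I j)]) x‖ :=
        Real.iSup_nonneg fun n => Real.iSup_nonneg fun _ => norm_nonneg _
      have hSnn : 0 ≤ Sφ j x + Sχ j x := add_nonneg (hSφ_nn j x) (hSχ_nn j x)
      have hosc_le : (⨆ n ∈ Set.Ico (I j) (I (j + 1)),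
          ‖(μ[f|ℱ n]) x - (μ[f|ℱ (I j)]) x‖) ≤ Sφ j x + Sχ j x := by
        refine Real.iSup_le (fun n => Real.iSup_le (fun hn => ?_) hSnn) hSnn
        have hnK : n ∈ K j := Finset.mem_insert_of_mem (Finset.mem_Ico.2 hn)
        have h1 : ‖(μ[f|ℱ n]) x - (μ[f|ℱ (I j)]) x‖
            ≤ |((μ[f|ℱ n]) x - (μ[f|ℱ (I j)]) x).re|
              + |((μ[f|ℱ n]) x - (μ[f|ℱ (I j)]) x).im| :=
          Complex.norm_le_abs_re_add_abs_im _
        rw [Complex.sub_re, Complex.sub_im, (hx n).1, (hx n).2,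
          (hx (I j)).1, (hx (I j)).2] at h1
        refine le_trans h1 (add_le_add ?_ ?_)
        · simp only [hSφdef]
          exact Finset.le_sup' (fun n => |(μ[φ|ℱ n]) x - (μ[φ|ℱ (I j)]) x|) hnK
        · simp only [hSχdef]
          exact Finset.le_sup' (fun n => |(μ[χ|ℱ n]) x - (μ[χ|ℱ (I j)]) x|) hnK
      calc (⨆ n ∈ Set.Ico (I j) (I (j + 1)), ‖(μ[f|ℱ n]) x - (μ[f|ℱ (I j)]) x‖) ^ 2
          ≤ (Sφ j x + Sχ j x) ^ 2 := pow_le_pow_left₀ hosc_nn hosc_le 2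
        _ ≤ 2 * Sφ j x ^ 2 + 2 * Sχ j x ^ 2 := by nlinarith [sq_nonneg (Sφ j x - Sχ j x)]
    calc ENNReal.ofReal (∑ j ∈ Finset.range N,
        (⨆ n ∈ Set.Ico (I j) (I (j + 1)), ‖(μ[f|ℱ n]) x - (μ[f|ℱ (I j)]) x‖) ^ 2)
        ≤ ENNReal.ofReal (∑ j ∈ Finset.range N, (2 * Sφ j x ^ 2 + 2 * Sχ j x ^ 2)) :=
          ENNReal.ofReal_le_ofReal hsum
      _ = ∑ j ∈ Finset.range N,
          (2 * ENNReal.ofReal (Sφ j x ^ 2) + 2 * ENNReal.ofReal (Sχ j x ^ 2)) := by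
          rw [ENNReal.ofReal_sum_of_nonneg (fun j _ => by positivity)]
          refine Finset.sum_congr rfl fun j _ => ?_
          rw [ENNReal.ofReal_add (by positivity) (by positivity),
            ENNReal.ofReal_mul (by norm_num : (0:ℝ) ≤ 2),
            ENNReal.ofReal_mul (by norm_num : (0:ℝ) ≤ 2), ENNReal.ofReal_ofNat]
  have hpow2 : ∀ y : ℝ, y ^ (2:ℝ) = y ^ 2 := fun y => by
    rw [show (2:ℝ) = ((2:ℕ):ℝ) by norm_num, Real.rpow_natCast]
  have hS_nn : ∀ x, 0 ≤ ∑ j ∈ Finset.range N,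
      (⨆ n ∈ Set.Ico (I j) (I (j + 1)), ‖(μ[f|ℱ n]) x - (μ[f|ℱ (I j)]) x‖) ^ 2 :=
    fun x => Finset.sum_nonneg fun j _ => sq_nonneg _
  have hLHS : eLpNorm (fun x => Real.sqrt (∑ j ∈ Finset.range N,
      (⨆ n ∈ Set.Ico (I j) (I (j + 1)), ‖(μ[f|ℱ n]) x - (μ[f|ℱ (I j)]) x‖) ^ 2)) 2 μ
      = (∫⁻ x, ENNReal.ofReal (∑ j ∈ Finset.range N,
          (⨆ n ∈ Set.Ico (I j) (I (j + 1)),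
            ‖(μ[f|ℱ n]) x - (μ[f|ℱ (I j)]) x‖) ^ 2) ∂μ) ^ (1/2:ℝ) := by
    rw [eLpNorm_eq_lintegral_rpow_enorm_toReal (by norm_num) (by exact ENNReal.ofNat_ne_top)]
    simp only [ENNReal.toReal_ofNat]
    congr 1
    refine lintegral_congr fun x => ?_
    rw [Real.enorm_eq_ofReal (Real.sqrt_nonneg _),
      ENNReal.ofReal_rpow_of_nonneg (Real.sqrt_nonneg _) (by norm_num), hpow2,
      Real.sq_sqrt (hS_nn x)]
  have hRHS : eLpNorm f 2 μ = (∫⁻ x, (‖f x‖₊ : ℝ≥0∞) ^ (2:ℝ) ∂μ) ^ (1/2:ℝ) := by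
    rw [eLpNorm_eq_lintegral_rpow_enorm_toReal (by norm_num) (by exact ENNReal.ofNat_ne_top)]
    simp only [ENNReal.toReal_ofNat]
    rfl
  -- the main chain
  have hψ2φ : ∀ c d : ℤ, MemLp (fun x => (μ[φ|ℱ d]) x - (μ[φ|ℱ c]) x) 2 μ := fun c d =>
    (memℒp_two_condexp (ℱ.le d) hφi hφ2).sub (memℒp_two_condexp (ℱ.le c) hφi hφ2)
  have hψ2χ : ∀ c d : ℤ, MemLp (fun x => (μ[χ|ℱ d]) x - (μ[χ|ℱ c]) x) 2 μ := fun c d =>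
    (memℒp_two_condexp (ℱ.le d) hχi hχ2).sub (memℒp_two_condexp (ℱ.le c) hχi hχ2)
  have hmeasG : ∀ j : ℕ, Measurable (fun x =>
      2 * ENNReal.ofReal (Sφ j x ^ 2) + 2 * ENNReal.ofReal (Sχ j x ^ 2)) := fun j =>
    ((((hSφ_meas j).pow_const 2).ennreal_ofReal).const_mul 2).add
      ((((hSχ_meas j).pow_const 2).ennreal_ofReal).const_mul 2)
  have h3 : ∀ j, j < N → (∫⁻ x, (2 * ENNReal.ofReal (Sφ j x ^ 2)
        + 2 * ENNReal.ofReal (Sχ j x ^ 2)) ∂μ)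
      ≤ 8 * ENNReal.ofReal (∫ x, ((μ[φ|ℱ (I (j+1) - 1)]) x - (μ[φ|ℱ (I j)]) x) ^ 2 ∂μ)
        + 8 * ENNReal.ofReal (∫ x, ((μ[χ|ℱ (I (j+1) - 1)]) x - (μ[χ|ℱ (I j)]) x) ^ 2 ∂μ) := by
    intro j hj
    have hSφeq : ∀ x, Sφ j x = (Finset.Ico (I j) (I (j+1))).sup'
        (Finset.nonempty_Ico.2 (hIlt j hj))
        (fun n => |(μ[φ|ℱ n]) x - (μ[φ|ℱ (I j)]) x|) := fun x =>
      Finset.sup'_congr (hKne j) (hKeq j hj) (fun _ _ => rfl)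
    have hSχeq : ∀ x, Sχ j x = (Finset.Ico (I j) (I (j+1))).sup'
        (Finset.nonempty_Ico.2 (hIlt j hj))
        (fun n => |(μ[χ|ℱ n]) x - (μ[χ|ℱ (I j)]) x|) := fun x =>
      Finset.sup'_congr (hKne j) (hKeq j hj) (fun _ _ => rfl)
    have hconvφ : ∫⁻ x, ENNReal.ofReal (|(μ[φ|ℱ (I (j+1) - 1)]) x - (μ[φ|ℱ (I j)]) x| ^ 2) ∂μ
        = ENNReal.ofReal (∫ x, ((μ[φ|ℱ (I (j+1) - 1)]) x - (μ[φ|ℱ (I j)]) x) ^ 2 ∂μ) := by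
      rw [ofReal_integral_eq_lintegral_ofReal (hψ2φ (I j) (I (j+1) - 1)).integrable_sq
        (Filter.Eventually.of_forall fun x => sq_nonneg _)]
      refine lintegral_congr fun x => ?_
      rw [sq_abs]
    have hconvχ : ∫⁻ x, ENNReal.ofReal (|(μ[χ|ℱ (I (j+1) - 1)]) x - (μ[χ|ℱ (I j)]) x| ^ 2) ∂μ
        = ENNReal.ofReal (∫ x, ((μ[χ|ℱ (I (j+1) - 1)]) x - (μ[χ|ℱ (I j)]) x) ^ 2 ∂μ) := by
      rw [ofReal_integral_eq_lintegral_ofReal (hψ2χ (I j) (I (j+1) - 1)).integrable_sq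
        (Filter.Eventually.of_forall fun x => sq_nonneg _)]
      refine lintegral_congr fun x => ?_
      rw [sq_abs]
    have hLφ : ∫⁻ x, ENNReal.ofReal (Sφ j x ^ 2) ∂μ
        ≤ 4 * ENNReal.ofReal (∫ x, ((μ[φ|ℱ (I (j+1) - 1)]) x - (μ[φ|ℱ (I j)]) x) ^ 2 ∂μ) := by
      rw [← hconvφ]
      calc ∫⁻ x, ENNReal.ofReal (Sφ j x ^ 2) ∂μ
          = ∫⁻ x, ENNReal.ofReal (((Finset.Ico (I j) (I (j+1))).sup'
              (Finset.nonempty_Ico.2 (hIlt j hj))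
              (fun n => |(μ[φ|ℱ n]) x - (μ[φ|ℱ (I j)]) x|)) ^ 2) ∂μ := by
            refine lintegral_congr fun x => ?_
            rw [hSφeq x]
        _ ≤ _ := doob ℱ hφi hφ2 (hIlt j hj)
    have hLχ : ∫⁻ x, ENNReal.ofReal (Sχ j x ^ 2) ∂μ
        ≤ 4 * ENNReal.ofReal (∫ x, ((μ[χ|ℱ (I (j+1) - 1)]) x - (μ[χ|ℱ (I j)]) x) ^ 2 ∂μ) := by
      rw [← hconvχ]
      calc ∫⁻ x, ENNReal.ofReal (Sχ j x ^ 2) ∂μ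
          = ∫⁻ x, ENNReal.ofReal (((Finset.Ico (I j) (I (j+1))).sup'
              (Finset.nonempty_Ico.2 (hIlt j hj))
              (fun n => |(μ[χ|ℱ n]) x - (μ[χ|ℱ (I j)]) x|)) ^ 2) ∂μ := by
            refine lintegral_congr fun x => ?_
            rw [hSχeq x]
        _ ≤ _ := doob ℱ hχi hχ2 (hIlt j hj)
    calc ∫⁻ x, (2 * ENNReal.ofReal (Sφ j x ^ 2) + 2 * ENNReal.ofReal (Sχ j x ^ 2)) ∂μ
        = 2 * ∫⁻ x, ENNReal.ofReal (Sφ j x ^ 2) ∂μ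
          + 2 * ∫⁻ x, ENNReal.ofReal (Sχ j x ^ 2) ∂μ := by
          rw [lintegral_add_left ((((hSφ_meas j).pow_const 2).ennreal_ofReal).const_mul 2),
            lintegral_const_mul 2 ((hSφ_meas j).pow_const 2).ennreal_ofReal,
            lintegral_const_mul 2 ((hSχ_meas j).pow_const 2).ennreal_ofReal]
      _ ≤ 2 * (4 * ENNReal.ofReal (∫ x, ((μ[φ|ℱ (I (j+1) - 1)]) x - (μ[φ|ℱ (I j)]) x) ^ 2 ∂μ))
          + 2 * (4 * ENNReal.ofReal (∫ x, ((μ[χ|ℱ (I (j+1) - 1)]) x - (μ[χ|ℱ (I j)]) x) ^ 2 ∂μ)) :=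
          add_le_add (mul_le_mul_right hLφ 2) (mul_le_mul_right hLχ 2)
      _ = 8 * ENNReal.ofReal (∫ x, ((μ[φ|ℱ (I (j+1) - 1)]) x - (μ[φ|ℱ (I j)]) x) ^ 2 ∂μ)
          + 8 * ENNReal.ofReal (∫ x, ((μ[χ|ℱ (I (j+1) - 1)]) x - (μ[χ|ℱ (I j)]) x) ^ 2 ∂μ) := by
          ring
  have hfnorm_int : Integrable (fun x => ‖f x‖ ^ 2) μ :=
    (memLp_two_iff_integrable_sq_norm hf2.aestronglyMeasurable).1 hf2
  have hchain : (∫⁻ x, ENNReal.ofReal (∑ j ∈ Finset.range N,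
      (⨆ n ∈ Set.Ico (I j) (I (j + 1)), ‖(μ[f|ℱ n]) x - (μ[f|ℱ (I j)]) x‖) ^ 2) ∂μ)
      ≤ 8 * ∫⁻ x, (‖f x‖₊ : ℝ≥0∞) ^ (2:ℝ) ∂μ := by
    calc (∫⁻ x, ENNReal.ofReal (∑ j ∈ Finset.range N,
        (⨆ n ∈ Set.Ico (I j) (I (j + 1)), ‖(μ[f|ℱ n]) x - (μ[f|ℱ (I j)]) x‖) ^ 2) ∂μ)
        ≤ ∫⁻ x, ∑ j ∈ Finset.range N,
            (2 * ENNReal.ofReal (Sφ j x ^ 2) + 2 * ENNReal.ofReal (Sχ j x ^ 2)) ∂μ :=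
          lintegral_mono_ae hpoint
      _ = ∑ j ∈ Finset.range N, ∫⁻ x,
            (2 * ENNReal.ofReal (Sφ j x ^ 2) + 2 * ENNReal.ofReal (Sχ j x ^ 2)) ∂μ :=
          lintegral_finset_sum _ (fun j _ => hmeasG j)
      _ ≤ ∑ j ∈ Finset.range N,
          (8 * ENNReal.ofReal (∫ x, ((μ[φ|ℱ (I (j+1) - 1)]) x - (μ[φ|ℱ (I j)]) x) ^ 2 ∂μ)
            + 8 * ENNReal.ofReal (∫ x, ((μ[χ|ℱ (I (j+1) - 1)]) x - (μ[χ|ℱ (I j)]) x) ^ 2 ∂μ)) :=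
          Finset.sum_le_sum fun j hj => h3 j (Finset.mem_range.1 hj)
      _ = 8 * ∑ j ∈ Finset.range N,
            ENNReal.ofReal (∫ x, ((μ[φ|ℱ (I (j+1) - 1)]) x - (μ[φ|ℱ (I j)]) x) ^ 2 ∂μ)
          + 8 * ∑ j ∈ Finset.range N,
            ENNReal.ofReal (∫ x, ((μ[χ|ℱ (I (j+1) - 1)]) x - (μ[χ|ℱ (I j)]) x) ^ 2 ∂μ) := by
          rw [Finset.sum_add_distrib, Finset.mul_sum, Finset.mul_sum]
      _ ≤ 8 * ENNReal.ofReal (∫ x, φ x ^ 2 ∂μ) + 8 * ENNReal.ofReal (∫ x, χ x ^ 2 ∂μ) := by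
          refine add_le_add (mul_le_mul_right ?_ 8) (mul_le_mul_right ?_ 8)
          · rw [← ENNReal.ofReal_sum_of_nonneg
              (fun j _ => integral_nonneg fun x => sq_nonneg _)]
            exact ENNReal.ofReal_le_ofReal (telescope ℱ hφi hφ2 N I hI)
          · rw [← ENNReal.ofReal_sum_of_nonneg
              (fun j _ => integral_nonneg fun x => sq_nonneg _)]
            exact ENNReal.ofReal_le_ofReal (telescope ℱ hχi hχ2 N I hI)
      _ = 8 * ENNReal.ofReal (∫ x, ‖f x‖ ^ 2 ∂μ) := by
          rw [← mul_add, ← ENNReal.ofReal_add (integral_nonneg fun x => sq_nonneg _)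
            (integral_nonneg fun x => sq_nonneg _)]
          congr 2
          rw [← integral_add hφ2.integrable_sq hχ2.integrable_sq]
          refine integral_congr_ae (Filter.Eventually.of_forall fun x => ?_)
          simp only [hφdef, hχdef, Complex.sq_norm, Complex.normSq_apply]
          ring
      _ = 8 * ∫⁻ x, (‖f x‖₊ : ℝ≥0∞) ^ (2:ℝ) ∂μ := by
          congr 1
          rw [ofReal_integral_eq_lintegral_ofReal hfnorm_int
            (Filter.Eventually.of_forall fun x => sq_nonneg _)]
          refine lintegral_congr fun x => ?_
          rw [← enorm_eq_nnnorm, ← ofReal_norm,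
            ENNReal.ofReal_rpow_of_nonneg (norm_nonneg _) (by norm_num), hpow2]
  rw [hLHS]
  calc (∫⁻ x, ENNReal.ofReal (∑ j ∈ Finset.range N,
      (⨆ n ∈ Set.Ico (I j) (I (j + 1)),
        ‖(μ[f|ℱ n]) x - (μ[f|ℱ (I j)]) x‖) ^ 2) ∂μ) ^ (1/2:ℝ)
      ≤ (8 * ∫⁻ x, (‖f x‖₊ : ℝ≥0∞) ^ (2:ℝ) ∂μ) ^ (1/2:ℝ) :=
        ENNReal.rpow_le_rpow hchain (by norm_num)
    _ = (8:ℝ≥0∞) ^ (1/2:ℝ) * (∫⁻ x, (‖f x‖₊ : ℝ≥0∞) ^ (2:ℝ) ∂μ) ^ (1/2:ℝ) :=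
        ENNReal.mul_rpow_of_nonneg _ _ (by norm_num)
    _ ≤ ENNReal.ofReal 3 * eLpNorm f 2 μ := by
        rw [hRHS, ENNReal.ofReal_ofNat]
        refine mul_le_mul_left ?_ _
        calc (8:ℝ≥0∞) ^ (1/2:ℝ) ≤ (9:ℝ≥0∞) ^ (1/2:ℝ) :=
              ENNReal.rpow_le_rpow (by norm_num) (by norm_num)
          _ = ((3:ℝ≥0∞) ^ (2:ℝ)) ^ (1/2:ℝ) := by
              congr 1
              rw [show (2:ℝ) = ((2:ℕ):ℝ) by norm_num, ENNReal.rpow_natCast]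
              norm_num
          _ = (3:ℝ≥0∞) ^ ((2:ℝ) * (1/2:ℝ)) := by rw [← ENNReal.rpow_mul]
          _ = 3 := by norm_num
end

section
/- Let q ∈ ℕ, a ∈ ℤ with gcd(a,q) = 1 and q ≥ 2, and let d ≥ 2. Define the one-dimensional Gauss–Weyl sum G(a/q) := q^{-1} Σ_{r=1}^{q} e^{2πi (a/q) r^d}. Then there exist constants δ > 0 and C > 0 depending only on d such that |G(a/q)| ≤ C q^{-δ}. -/
open Finset Polynomial

noncomputable section
namespace GaussWeyl

-- === from t1.lean ===



/-- `ec q n = e(n/q)`. -/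
def ec (q : ℕ) (n : ℤ) : ℂ := Complex.exp (2 * Real.pi * Complex.I * n / q)

lemma ec_add (q : ℕ) (m n : ℤ) : ec q (m + n) = ec q m * ec q n := by
  rw [ec, ec, ec, ← Complex.exp_add]
  congr 1
  push_cast
  ring

lemma ec_zero (q : ℕ) : ec q 0 = 1 := by simp [ec]

lemma ec_ne_zero (q : ℕ) (n : ℤ) : ec q n ≠ 0 := Complex.exp_ne_zero _

lemma ec_norm (q : ℕ) (n : ℤ) : ‖ec q n‖ = 1 := by
  have h : (2 * Real.pi * Complex.I * n / q) = ((2 * Real.pi * n / q : ℝ) : ℂ) * Complex.I := by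
    push_cast
    ring
  rw [ec, h, Complex.norm_exp_ofReal_mul_I]

lemma ec_dvd_eq_one (q : ℕ) {n : ℤ} (h : (q : ℤ) ∣ n) : ec q n = 1 := by
  obtain ⟨t, rfl⟩ := h
  rcases eq_or_ne q 0 with rfl | hq
  · simp [ec]
  rw [ec]
  have hq' : (q : ℂ) ≠ 0 := Nat.cast_ne_zero.mpr hq
  have h2 : 2 * (Real.pi : ℂ) * Complex.I * (((q : ℤ) * t : ℤ) : ℂ) / q
      = (t : ℂ) * (2 * Real.pi * Complex.I) := by
    push_cast
    field_simp
  rw [h2, Complex.exp_int_mul_two_pi_mul_I]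

lemma ec_eq_one_iff (q : ℕ) (hq : 0 < q) (n : ℤ) : ec q n = 1 ↔ (q : ℤ) ∣ n := by
  constructor
  · intro h
    rw [ec, Complex.exp_eq_one_iff] at h
    obtain ⟨m, hm⟩ := h
    have hq' : (q : ℂ) ≠ 0 := Nat.cast_ne_zero.mpr hq.ne'
    have hpi : (Real.pi : ℂ) ≠ 0 := Complex.ofReal_ne_zero.mpr Real.pi_ne_zero
    have hI : Complex.I ≠ 0 := Complex.I_ne_zero
    have h3 : (2 * (Real.pi:ℂ) * Complex.I) * ((n : ℂ) / q) = (2 * (Real.pi:ℂ) * Complex.I) * m := by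
      rw [mul_comm ((m:ℂ)) (2 * (Real.pi:ℂ) * Complex.I)] at hm
      rw [← hm]; ring
    have h4 : (n : ℂ) / q = m := by
      have hne : (2 * (Real.pi:ℂ) * Complex.I) ≠ 0 := by
        simp [Real.pi_ne_zero, Complex.I_ne_zero]
      exact mul_left_cancel₀ hne h3
    have h5 : (n : ℂ) = (m : ℂ) * q := by
      rw [← h4, div_mul_cancel₀]
      exact hq'
    refine ⟨m, ?_⟩
    have : (n : ℤ) = m * q := by exact_mod_cast h5
    rw [this, mul_comm]
  · exact ec_dvd_eq_one q

lemma ec_congr (q : ℕ) {m n : ℤ} (h : m ≡ n [ZMOD q]) : ec q m = ec q n := by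
  have hd : (q : ℤ) ∣ m - n := Int.ModEq.dvd h.symm
  have : ec q m = ec q n * ec q (m - n) := by rw [← ec_add]; ring_nf
  rw [this, ec_dvd_eq_one q hd, mul_one]

lemma ec_conj (q : ℕ) (n : ℤ) : (starRingEnd ℂ) (ec q n) = ec q (-n) := by
  have h1 : ec q n * ec q (-n) = 1 := by rw [← ec_add]; simp [ec_zero]
  have h2 : ec q n * (starRingEnd ℂ) (ec q n) = 1 := by
    rw [Complex.mul_conj]
    have : Complex.normSq (ec q n) = 1 := by
      rw [Complex.normSq_eq_norm_sq, ec_norm, one_pow]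
    rw [this, Complex.ofReal_one]
  exact mul_left_cancel₀ (ec_ne_zero q n) (h2.trans h1.symm)

-- === from t2.lean ===

/-- forward difference of a polynomial -/
noncomputable def delta (h : ℤ) (P : Polynomial ℤ) : Polynomial ℤ := P.comp (X + C h) - P

/-- forward difference of a polynomial -/

lemma delta_eval (h x : ℤ) (P : Polynomial ℤ) :
    (delta h P).eval x = P.eval (x + h) - P.eval x := by
  simp [delta, eval_comp]

lemma comp_coeff (P : Polynomial ℤ) (h : ℤ) (N m : ℕ) (hP : P.natDegree < N) :
    (P.comp (X + C h)).coeff m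
      = ∑ i ∈ range N, P.coeff i * (h ^ (i - m) * (i.choose m : ℤ)) := by
  conv_lhs => rw [P.as_sum_range' N hP]
  rw [Polynomial.comp, Polynomial.eval₂_finset_sum]
  rw [finset_sum_coeff]
  refine Finset.sum_congr rfl fun i _ => ?_
  rw [Polynomial.eval₂_monomial]
  rw [Polynomial.coeff_C_mul, Polynomial.coeff_X_add_C_pow]

lemma delta_coeff_eq_zero (P : Polynomial ℤ) (h : ℤ) (n : ℕ) (hP : P.natDegree ≤ n + 1)
    {m : ℕ} (hm : n + 1 ≤ m) : (delta h P).coeff m = 0 := by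
  have hP' : P.natDegree < n + 2 := Nat.lt_succ_of_le hP
  rw [delta, Polynomial.coeff_sub, comp_coeff P h (n+2) m hP']
  have hsum : ∑ i ∈ range (n+2), P.coeff i * (h ^ (i - m) * (i.choose m : ℤ)) = P.coeff m := by
    rcases lt_or_ge m (n+2) with hlt | hge
    · rw [Finset.sum_eq_single m]
      · simp
      · intro i hi hne
        rcases lt_or_ge i m with h1 | h1
        · rw [Nat.choose_eq_zero_of_lt h1]; ring
        · have : i < n + 2 := Finset.mem_range.mp hi
          omega
      · intro hmem; exact absurd (Finset.mem_range.mpr hlt) hmem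
    · rw [Finset.sum_eq_zero, eq_comm]
      · exact Polynomial.coeff_eq_zero_of_natDegree_lt (by omega)
      · intro i hi
        have : i < n + 2 := Finset.mem_range.mp hi
        rw [Nat.choose_eq_zero_of_lt (by omega)]; ring
  rw [hsum, sub_self]

lemma delta_natDegree_le (P : Polynomial ℤ) (h : ℤ) (n : ℕ) (hP : P.natDegree ≤ n + 1) :
    (delta h P).natDegree ≤ n :=
  Polynomial.natDegree_le_iff_coeff_eq_zero.mpr fun m hm =>
    delta_coeff_eq_zero P h n hP (by omega)

lemma delta_coeff_top (P : Polynomial ℤ) (h : ℤ) (n : ℕ) (hP : P.natDegree ≤ n + 1) :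
    (delta h P).coeff n = (n + 1 : ℤ) * h * P.coeff (n + 1) := by
  have hP' : P.natDegree < n + 2 := Nat.lt_succ_of_le hP
  rw [delta, Polynomial.coeff_sub, comp_coeff P h (n+2) n hP']
  rw [Finset.sum_range_succ, Finset.sum_range_succ]
  rw [Finset.sum_eq_zero]
  · simp [Nat.choose_succ_self_right]
    ring
  · intro i hi
    have : i < n := Finset.mem_range.mp hi
    rw [Nat.choose_eq_zero_of_lt this]; ring

-- === from t3.lean ===


lemma eval_modEq (P : Polynomial ℤ) (q : ℕ) {a b : ℤ} (hab : a ≡ b [ZMOD q]) :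
    P.eval a ≡ P.eval b [ZMOD q] := by
  induction P using Polynomial.induction_on with
  | C c => simp [Int.ModEq.refl]
  | add p r hp hr => simpa using hp.add hr
  | monomial n c ih =>
    simpa using (Int.ModEq.mul_left c (hab.pow (n+1)))

-- === from t4.lean ===

/-- The complete exponential sum over a period. -/
noncomputable def S (q : ℕ) (P : Polynomial ℤ) : ℂ :=
  ∑ r ∈ Finset.range q, ec q (P.eval (r : ℤ))




/-- The complete exponential sum over a period. -/

lemma sum_val (q : ℕ) [NeZero q] (f : ℕ → ℂ) :
    ∑ x : ZMod q, f x.val = ∑ r ∈ Finset.range q, f r := by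
  apply Finset.sum_nbij' (i := fun (x : ZMod q) => x.val) (j := fun (r : ℕ) => (r : ZMod q))
  · intro a _
    exact Finset.mem_range.mpr (ZMod.val_lt a)
  · intro r _
    exact Finset.mem_univ _
  · intro a _
    exact ZMod.natCast_rightInverse a
  · intro r hr
    exact ZMod.val_natCast_of_lt (Finset.mem_range.mp hr)
  · intro a _
    rfl

lemma S_eq_zmod (q : ℕ) [NeZero q] (P : Polynomial ℤ) :
    S q P = ∑ x : ZMod q, ec q (P.eval (x.val : ℤ)) := by
  rw [S, ← sum_val q (fun r => ec q (P.eval (r : ℤ)))]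

-- === from t5.lean ===



lemma term_identity (q : ℕ) [NeZero q] (P : Polynomial ℤ) (x h : ZMod q) :
    ec q (P.eval ((x + h).val : ℤ)) * (starRingEnd ℂ) (ec q (P.eval (x.val : ℤ)))
      = ec q ((delta (h.val : ℤ) P).eval (x.val : ℤ)) := by
  rw [ec_conj, ← ec_add]
  rw [delta_eval]
  apply ec_congr
  have hval : ((x + h).val : ℤ) ≡ ((x.val : ℤ) + (h.val : ℤ)) [ZMOD q] := by
    have h1 : (x + h).val ≡ x.val + h.val [MOD q] := by
      rw [ZMod.val_add]
      exact Nat.mod_modEq _ _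
    have := Int.natCast_modEq_iff.mpr h1
    push_cast at this
    exact this
  have h2 := (eval_modEq P q hval).sub_right (P.eval (x.val : ℤ))
  rw [sub_eq_add_neg] at h2
  exact h2

lemma weyl_sq (q : ℕ) [NeZero q] (P : Polynomial ℤ) :
    ‖S q P‖ ^ 2 ≤ ∑ h : ZMod q, ‖S q (delta (h.val : ℤ) P)‖ := by
  have key : S q P * (starRingEnd ℂ) (S q P) = ∑ h : ZMod q, S q (delta (h.val : ℤ) P) := by
    rw [S_eq_zmod, map_sum, Finset.sum_mul_sum, Finset.sum_comm]
    have step : ∀ x : ZMod q,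
        ∑ y : ZMod q, ec q (P.eval (y.val : ℤ)) * (starRingEnd ℂ) (ec q (P.eval (x.val : ℤ)))
        = ∑ h : ZMod q, ec q ((delta (h.val : ℤ) P).eval (x.val : ℤ)) := by
      intro x
      rw [← Equiv.sum_comp (Equiv.addLeft x)
        (fun y => ec q (P.eval (y.val : ℤ)) * (starRingEnd ℂ) (ec q (P.eval (x.val : ℤ))))]
      refine Finset.sum_congr rfl fun h _ => ?_
      simpa using term_identity q P x h
    rw [Finset.sum_congr rfl fun x _ => step x, Finset.sum_comm]
    refine Finset.sum_congr rfl fun h _ => ?_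
    rw [S_eq_zmod]
  have hnorm : ‖S q P‖ ^ 2 = ‖S q P * (starRingEnd ℂ) (S q P)‖ := by
    rw [norm_mul, RCLike.norm_conj, sq]
  rw [hnorm, key]
  exact norm_sum_le _ _

-- === from t6.lean ===



lemma S_trivial_bound (q : ℕ) (P : Polynomial ℤ) : ‖S q P‖ ≤ q := by
  have h1 : ‖S q P‖ ≤ ∑ r ∈ Finset.range q, ‖ec q (P.eval (r : ℤ))‖ := norm_sum_le _ _
  have h2 : ∑ r ∈ Finset.range q, ‖ec q (P.eval (r : ℤ))‖ = ∑ _r ∈ Finset.range q, (1:ℝ) :=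
    Finset.sum_congr rfl fun r _ => ec_norm q _
  rw [h2] at h1
  simpa using h1

lemma S_linear (q : ℕ) (hq : 0 < q) (P : Polynomial ℤ) (hP : P.natDegree ≤ 1) :
    ‖S q P‖ ≤ Real.sqrt q * Real.sqrt (Int.gcd (P.coeff 1) q) := by
  haveI : NeZero q := ⟨hq.ne'⟩
  by_cases hdvd : (q : ℤ) ∣ P.coeff 1
  · have hgcd : Int.gcd (P.coeff 1) q = q := by
      rcases eq_or_ne (P.coeff 1) 0 with h0 | h0
      · simp [h0, Int.gcd]
      · have hd : q ∣ (P.coeff 1).natAbs := Int.natCast_dvd.mp hdvd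
        rw [Int.gcd]
        exact Nat.dvd_antisymm (Nat.gcd_dvd_right _ _) (Nat.dvd_gcd hd dvd_rfl)
    rw [hgcd]
    have := S_trivial_bound q P
    have hs : Real.sqrt q * Real.sqrt q = (q:ℝ) := Real.mul_self_sqrt (by positivity)
    rw [hs]
    exact this
  · -- the sum vanishes
    have hq1 : 1 < q := by
      rcases Nat.lt_or_ge q 2 with h | h
      · have h1 : q = 1 := by omega
        subst h1
        exact absurd (one_dvd _) hdvd
      · omega
    have heval : ∀ t : ℤ, P.eval t = P.coeff 0 + P.coeff 1 * t := by
      intro t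
      conv_lhs => rw [Polynomial.eq_X_add_C_of_natDegree_le_one hP]
      simp only [eval_add, eval_mul, eval_C, eval_X]
      ring
    have hzero : S q P = 0 := by
      have hshift : S q P = ec q (P.coeff 1) * S q P := by
        have hsum : ∑ x : ZMod q, ec q (P.eval ((x : ZMod q).val : ℤ))
            = ec q (P.coeff 1) * ∑ x : ZMod q, ec q (P.eval ((x : ZMod q).val : ℤ)) := by
          conv_lhs => rw [← Equiv.sum_comp (Equiv.addLeft 1)
            (fun x : ZMod q => ec q (P.eval ((x : ZMod q).val : ℤ)))]
          rw [Finset.mul_sum]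
          refine Finset.sum_congr rfl fun x _ => ?_
          simp only [Equiv.coe_addLeft]
          have hv : ((1 + x).val : ℤ) ≡ ((x.val : ℤ) + 1) [ZMOD q] := by
            have h1 : (1 + x).val ≡ (1:ZMod q).val + x.val [MOD q] := by
              rw [ZMod.val_add]; exact Nat.mod_modEq _ _
            have h2 := Int.natCast_modEq_iff.mpr h1
            haveI : Fact (1 < q) := ⟨hq1⟩
            rw [ZMod.val_one q] at h2
            push_cast at h2
            simpa [add_comm] using h2
          calc ec q (P.eval ((1 + x).val : ℤ)) = ec q (P.eval ((x.val : ℤ) + 1)) :=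
                ec_congr q (eval_modEq P q hv)
          _ = ec q (P.coeff 1) * ec q (P.eval (x.val : ℤ)) := by
                rw [heval, heval, ← ec_add]
                ring_nf
        rw [S_eq_zmod q P]
        exact hsum
      have hne : ec q (P.coeff 1) ≠ 1 := fun h => hdvd ((ec_eq_one_iff q hq _).mp h)
      have : (1 - ec q (P.coeff 1)) * S q P = 0 := by
        rw [sub_mul, one_mul, ← hshift, sub_self]
      rcases mul_eq_zero.mp this with h | h
      · exact absurd (by linear_combination -h : ec q (P.coeff 1) = 1) hne
      · exact h
    rw [hzero, norm_zero]
    positivity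

-- === from t7.lean ===


lemma succ_le_two_pow' (e : ℕ) : e + 1 ≤ 2 ^ e := Nat.succ_le_of_lt (Nat.lt_two_pow_self (n := e))

lemma succ_le_mul_two_pow (j e : ℕ) (hj : 1 ≤ j) : e + 1 ≤ j * 2 ^ (e / j) := by
  have h1 : e + 1 ≤ (e / j + 1) * j := by
    have h0 : e % j < j := Nat.mod_lt _ (by omega)
    have hdm : j * (e / j) + e % j = e := Nat.div_add_mod e j
    have hc : (e / j + 1) * j = j * (e / j) + j := by ring
    omega
  have h2 : e / j + 1 ≤ 2 ^ (e / j) := succ_le_two_pow' _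
  calc e + 1 ≤ (e / j + 1) * j := h1
    _ ≤ 2 ^ (e / j) * j := Nat.mul_le_mul_right j h2
    _ = j * 2 ^ (e / j) := Nat.mul_comm _ _

lemma pow_succ_le (j e : ℕ) (hj : 1 ≤ j) : (e + 1) ^ j ≤ j ^ j * 2 ^ e := by
  calc (e + 1) ^ j ≤ (j * 2 ^ (e / j)) ^ j := Nat.pow_le_pow_left (succ_le_mul_two_pow j e hj) j
    _ = j ^ j * (2 ^ (e / j)) ^ j := mul_pow _ _ _
    _ = j ^ j * 2 ^ (e / j * j) := by rw [← pow_mul]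
    _ ≤ j ^ j * 2 ^ e := by
        have : e / j * j ≤ e := Nat.div_mul_le_self e j
        exact Nat.mul_le_mul_left _ (Nat.pow_le_pow_right (by omega) this)

lemma card_divisors_pow_le (j : ℕ) (hj : 1 ≤ j) (n : ℕ) (hn : n ≠ 0) :
    n.divisors.card ^ j ≤ (j ^ j) ^ (2 ^ j) * n := by
  rw [Nat.card_divisors hn]
  rw [← Finset.prod_pow]
  have step : ∀ p ∈ n.primeFactors,
      (n.factorization p + 1) ^ j ≤ (if p < 2 ^ j then j ^ j else 1) * p ^ (n.factorization p) := by
    intro p hp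
    have hprime : p.Prime := Nat.prime_of_mem_primeFactors hp
    set e := n.factorization p
    by_cases hsmall : p < 2 ^ j
    · rw [if_pos hsmall]
      calc (e + 1) ^ j ≤ j ^ j * 2 ^ e := pow_succ_le j e hj
        _ ≤ j ^ j * p ^ e := Nat.mul_le_mul_left _ (Nat.pow_le_pow_left hprime.two_le e)
    · rw [if_neg hsmall, one_mul]
      have h2 : e + 1 ≤ 2 ^ e := succ_le_two_pow' e
      calc (e + 1) ^ j ≤ (2 ^ e) ^ j := Nat.pow_le_pow_left h2 j
        _ = (2 ^ j) ^ e := by rw [← pow_mul, ← pow_mul, Nat.mul_comm]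
        _ ≤ p ^ e := Nat.pow_le_pow_left (by omega) e
  calc ∏ p ∈ n.primeFactors, (n.factorization p + 1) ^ j
      ≤ ∏ p ∈ n.primeFactors,
          (if p < 2 ^ j then j ^ j else 1) * p ^ (n.factorization p) := Finset.prod_le_prod' step
    _ = (∏ p ∈ n.primeFactors, (if p < 2 ^ j then j ^ j else 1))
        * ∏ p ∈ n.primeFactors, p ^ (n.factorization p) := Finset.prod_mul_distrib
    _ ≤ (j ^ j) ^ (2 ^ j) * n := by
        have hfact : ∏ p ∈ n.primeFactors, p ^ (n.factorization p) = n := by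
          have h := Nat.factorization_prod_pow_eq_self hn
          rw [← Nat.support_factorization]
          exact h
        rw [hfact]
        apply Nat.mul_le_mul_right
        calc (∏ p ∈ n.primeFactors, (if p < 2 ^ j then j ^ j else 1))
            = ∏ p ∈ n.primeFactors.filter (· < 2 ^ j), j ^ j := by
              rw [← Finset.prod_filter]
          _ = (j ^ j) ^ (n.primeFactors.filter (· < 2 ^ j)).card :=
              (Finset.prod_const _)
          _ ≤ (j ^ j) ^ (2 ^ j) := by
              apply Nat.pow_le_pow_right (by positivity)
              calc (n.primeFactors.filter (· < 2 ^ j)).card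
                  ≤ (Finset.range (2 ^ j)).card := Finset.card_le_card (by
                    intro p hp
                    simp only [Finset.mem_filter] at hp
                    exact Finset.mem_range.mpr hp.2)
                _ = 2 ^ j := Finset.card_range _

-- === from t8.lean ===


lemma filter_dvd_card_le (q g1 : ℕ) (hq : 0 < q) (hg1 : 0 < g1) :
    ((Finset.range q).filter (fun h => g1 ∣ h)).card ≤ 1 + (q - 1) / g1 := by
  have hsub : (Finset.range q).filter (fun h => g1 ∣ h)
      ⊆ insert 0 ((Finset.Ioc 0 (q-1)).filter (fun h => g1 ∣ h)) := by
    intro h hh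
    simp only [Finset.mem_filter, Finset.mem_range] at hh
    rcases Nat.eq_zero_or_pos h with rfl | hpos
    · exact Finset.mem_insert_self _ _
    · refine Finset.mem_insert_of_mem ?_
      simp only [Finset.mem_filter, Finset.mem_Ioc]
      exact ⟨⟨hpos, by omega⟩, hh.2⟩
  calc ((Finset.range q).filter (fun h => g1 ∣ h)).card
      ≤ (insert 0 ((Finset.Ioc 0 (q-1)).filter (fun h => g1 ∣ h))).card :=
        Finset.card_le_card hsub
    _ ≤ 1 + ((Finset.Ioc 0 (q-1)).filter (fun h => g1 ∣ h)).card := by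
        have := Finset.card_insert_le 0 ((Finset.Ioc 0 (q-1)).filter (fun h => g1 ∣ h))
        omega
    _ = 1 + (q - 1) / g1 := by rw [Nat.Ioc_filter_dvd_card_eq_div]

lemma gcd_fiber_card_le (q m g : ℕ) (hq : 0 < q) (hg : g ∣ q) :
    ((Finset.range q).filter (fun h => Nat.gcd (m * h) q = g)).card
      ≤ 1 + (q - 1) / (g / Nat.gcd g m) := by
  have hg0 : 0 < g := Nat.pos_of_dvd_of_pos hg hq
  have hc0 : 0 < Nat.gcd g m := Nat.gcd_pos_of_pos_left m hg0
  have hg10 : 0 < g / Nat.gcd g m := Nat.div_pos (Nat.le_of_dvd hg0 (Nat.gcd_dvd_left g m)) hc0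
  refine le_trans (Finset.card_le_card ?_) (filter_dvd_card_le q _ hq hg10)
  intro h hh
  simp only [Finset.mem_filter, Finset.mem_range] at hh ⊢
  refine ⟨hh.1, ?_⟩
  -- g ∣ m * h, deduce g / gcd g m ∣ h
  have hdvd : g ∣ m * h := hh.2 ▸ Nat.gcd_dvd_left _ _
  set c := Nat.gcd g m with hc
  have hcg : c ∣ g := Nat.gcd_dvd_left g m
  have hcm : c ∣ m := Nat.gcd_dvd_right g m
  have hco : Nat.Coprime (g / c) (m / c) := Nat.coprime_div_gcd_div_gcd hc0
  have hdvd2 : g / c ∣ (m / c) * h := by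
    have h1 : c * (g / c) ∣ c * ((m / c) * h) := by
      rw [Nat.mul_div_cancel' hcg, ← Nat.mul_assoc, Nat.mul_div_cancel' hcm]
      exact hdvd
    exact (mul_dvd_mul_iff_left hc0.ne').mp h1
  exact (Nat.Coprime.dvd_of_dvd_mul_left hco hdvd2)

lemma sum_sqrt_gcd (q m : ℕ) (hq : 0 < q) :
    ∑ h ∈ Finset.range q, Real.sqrt (Nat.gcd (m * h) q)
      ≤ 2 * q * q.divisors.card * Real.sqrt (Nat.gcd m q) := by
  have hmaps : ∀ h ∈ Finset.range q, Nat.gcd (m * h) q ∈ q.divisors :=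
    fun h _ => Nat.mem_divisors.mpr ⟨Nat.gcd_dvd_right _ _, hq.ne'⟩
  rw [← Finset.sum_fiberwise_of_maps_to hmaps (fun h => Real.sqrt (Nat.gcd (m * h) q))]
  have key : ∀ g ∈ q.divisors,
      ∑ h ∈ (Finset.range q).filter (fun h => Nat.gcd (m * h) q = g),
        Real.sqrt (Nat.gcd (m * h) q) ≤ 2 * q * Real.sqrt (Nat.gcd m q) := by
    intro g hgmem
    have hg : g ∣ q := (Nat.mem_divisors.mp hgmem).1
    have hg0 : 0 < g := Nat.pos_of_dvd_of_pos hg hq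
    have hc0 : 0 < Nat.gcd g m := Nat.gcd_pos_of_pos_left m hg0
    set c := Nat.gcd g m with hc
    set g1 := g / c with hg1def
    have hg10 : 0 < g1 := Nat.div_pos (Nat.le_of_dvd hg0 (Nat.gcd_dvd_left g m)) hc0
    have hinner : ∑ h ∈ (Finset.range q).filter (fun h => Nat.gcd (m * h) q = g),
        Real.sqrt (Nat.gcd (m * h) q)
        = ((Finset.range q).filter (fun h => Nat.gcd (m * h) q = g)).card * Real.sqrt g := by
      rw [Finset.sum_congr rfl (fun h hh => ?_), Finset.sum_const, nsmul_eq_mul]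
      have := (Finset.mem_filter.mp hh).2
      rw [this]
    rw [hinner]
    have hcard := gcd_fiber_card_le q m g hq hg
    have hcardR : (((Finset.range q).filter (fun h => Nat.gcd (m * h) q = g)).card : ℝ)
        ≤ 2 * q / g1 := by
      have h1 : (((Finset.range q).filter (fun h => Nat.gcd (m * h) q = g)).card : ℝ)
          ≤ 1 + ((q - 1) / g1 : ℕ) := by exact_mod_cast hcard
      have h2 : (((q - 1) / g1 : ℕ) : ℝ) ≤ (q : ℝ) / g1 := by
        calc (((q - 1) / g1 : ℕ) : ℝ) ≤ ((q - 1 : ℕ) : ℝ) / g1 := Nat.cast_div_le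
          _ ≤ (q : ℝ) / g1 := by
            gcongr
            exact_mod_cast Nat.sub_le q 1
      have h3 : (1 : ℝ) ≤ (q : ℝ) / g1 := by
        rw [le_div_iff₀ (by exact_mod_cast hg10)]
        have : g1 ∣ q := (hg1def ▸ (Nat.div_dvd_of_dvd (Nat.gcd_dvd_left g m)) : g1 ∣ g).trans hg
        have h5 := Nat.le_of_dvd hq this
        have h6 : (g1 : ℝ) ≤ q := by exact_mod_cast h5
        linarith
      calc (((Finset.range q).filter (fun h => Nat.gcd (m * h) q = g)).card : ℝ)
          ≤ 1 + ((q - 1) / g1 : ℕ) := h1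
        _ ≤ (q : ℝ) / g1 + (q : ℝ) / g1 := by linarith [h2, h3]
        _ = 2 * q / g1 := by ring
    have hsqrt : Real.sqrt g / g1 ≤ Real.sqrt (Nat.gcd m q) := by
      have hgR : (g : ℝ) = c * g1 := by
        rw [hg1def]
        rw [← Nat.cast_mul]
        norm_cast
        exact (Nat.mul_div_cancel' (Nat.gcd_dvd_left g m)).symm
      have hcle : (c : ℝ) ≤ g := by exact_mod_cast Nat.le_of_dvd hg0 (Nat.gcd_dvd_left g m)
      have hcdvd : c ∣ Nat.gcd m q := Nat.dvd_gcd (Nat.gcd_dvd_right g m) ((Nat.gcd_dvd_left g m).trans hg)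
      have hgcdmq : 0 < Nat.gcd m q := Nat.gcd_pos_of_pos_right m hq
      have hcle2 : (c : ℝ) ≤ Nat.gcd m q := by exact_mod_cast Nat.le_of_dvd hgcdmq hcdvd
      -- √g / g1 = c / √g ≤ √c ≤ √(gcd m q)
      have e1 : Real.sqrt g / g1 = c / Real.sqrt g := by
        rw [eq_div_iff (by positivity)]
        rw [div_mul_eq_mul_div, Real.mul_self_sqrt (by positivity)]
        rw [hgR]
        field_simp
      rw [e1]
      have e2 : (c:ℝ) / Real.sqrt g ≤ Real.sqrt c := by
        rw [div_le_iff₀ (by positivity)]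
        calc (c : ℝ) = Real.sqrt c * Real.sqrt c := (Real.mul_self_sqrt (by positivity)).symm
          _ ≤ Real.sqrt c * Real.sqrt g := by
            apply mul_le_mul_of_nonneg_left (Real.sqrt_le_sqrt hcle) (Real.sqrt_nonneg _)
      exact e2.trans (Real.sqrt_le_sqrt hcle2)
    calc (((Finset.range q).filter (fun h => Nat.gcd (m * h) q = g)).card : ℝ) * Real.sqrt g
        ≤ (2 * q / g1) * Real.sqrt g := by
          apply mul_le_mul_of_nonneg_right hcardR (Real.sqrt_nonneg _)
      _ = 2 * q * (Real.sqrt g / g1) := by ring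
      _ ≤ 2 * q * Real.sqrt (Nat.gcd m q) := by
          apply mul_le_mul_of_nonneg_left hsqrt (by positivity)
  calc ∑ g ∈ q.divisors, ∑ h ∈ (Finset.range q).filter (fun h => Nat.gcd (m * h) q = g),
        Real.sqrt (Nat.gcd (m * h) q)
      ≤ ∑ _g ∈ q.divisors, 2 * q * Real.sqrt (Nat.gcd m q) := Finset.sum_le_sum key
    _ = 2 * q * q.divisors.card * Real.sqrt (Nat.gcd m q) := by
        rw [Finset.sum_const, nsmul_eq_mul]
        ring

-- === from t9.lean ===



lemma sum_val' (q : ℕ) [NeZero q] (f : ℕ → ℝ) :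
    ∑ x : ZMod q, f x.val = ∑ r ∈ Finset.range q, f r := by
  apply Finset.sum_nbij' (i := fun (x : ZMod q) => x.val) (j := fun (r : ℕ) => (r : ZMod q))
  · intro a _; exact Finset.mem_range.mpr (ZMod.val_lt a)
  · intro r _; exact Finset.mem_univ _
  · intro a _; exact ZMod.natCast_rightInverse a
  · intro r hr; exact ZMod.val_natCast_of_lt (Finset.mem_range.mp hr)
  · intro a _; rfl

lemma nat_gcd_mul_le (a x q : ℕ) (ha : 0 < a) : Nat.gcd (a * x) q ≤ a * Nat.gcd x q := by
  have h1 : gcd q (a * x) ∣ gcd q a * gcd q x := gcd_mul_dvd_mul_gcd q a x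
  rw [gcd_eq_nat_gcd, gcd_eq_nat_gcd, gcd_eq_nat_gcd] at h1
  rw [Nat.gcd_comm q (a*x), Nat.gcd_comm q a, Nat.gcd_comm q x] at h1
  rcases Nat.eq_zero_or_pos (Nat.gcd x q) with hz | hpos
  · rw [Nat.gcd_comm] at hz
    have hx : x = 0 ∧ q = 0 := by
      constructor
      · exact Nat.eq_zero_of_gcd_eq_zero_right hz
      · exact Nat.eq_zero_of_gcd_eq_zero_left hz
    rcases hx with ⟨rfl, rfl⟩
    simp
  · calc Nat.gcd (a * x) q ≤ Nat.gcd a q * Nat.gcd x q :=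
        Nat.le_of_dvd (Nat.mul_pos (Nat.gcd_pos_of_pos_left q ha) hpos) h1
      _ ≤ a * Nat.gcd x q := Nat.mul_le_mul_right _ (Nat.gcd_le_left q ha)

lemma int_gcd_natAbs (c : ℤ) (q : ℕ) : Int.gcd c (q : ℤ) = Nat.gcd c.natAbs q := by
  simp [Int.gcd]

lemma rpow_collect (Q : ℝ) (hQ : 0 < Q) (k j : ℕ) :
    (Q ^ (2 ^ k - 1 : ℕ)) * Q ^ ((2 ^ k : ℝ) - 2⁻¹ + (k : ℝ) / (j : ℝ)) * (Q * Q ^ ((j:ℝ)⁻¹))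
      = Q ^ ((2 ^ (k+1) : ℝ) - 2⁻¹ + ((k : ℝ) + 1) / (j : ℝ)) := by
  have hq1 : Q * Q ^ ((j:ℝ)⁻¹) = Q ^ (1 + (j:ℝ)⁻¹) := by
    rw [Real.rpow_add hQ, Real.rpow_one]
  rw [hq1, ← Real.rpow_natCast Q (2 ^ k - 1)]
  rw [← Real.rpow_add hQ, ← Real.rpow_add hQ]
  congr 1
  have h1 : ((2 ^ k - 1 : ℕ) : ℝ) = (2:ℝ) ^ k - 1 := by
    have : (1:ℕ) ≤ 2 ^ k := Nat.one_le_two_pow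
    push_cast [this]
    ring
  rw [h1]
  push_cast
  ring

lemma claim (j : ℕ) (hj : 1 ≤ j) (T : ℝ) (hT : 0 < T)
    (hTle : ∀ q : ℕ, 0 < q → (q.divisors.card : ℝ) ≤ T * (q : ℝ) ^ ((j:ℝ)⁻¹)) (k : ℕ) :
    ∃ C : ℝ, 0 < C ∧ ∀ q : ℕ, 0 < q → ∀ P : Polynomial ℤ, P.natDegree ≤ k + 1 →
      ‖S q P‖ ^ (2 ^ k) ≤ C * (q : ℝ) ^ ((2 ^ k : ℝ) - 2⁻¹ + (k : ℝ) / (j : ℝ))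
        * Real.sqrt (Int.gcd (P.coeff (k+1)) q) := by
  induction k with
  | zero =>
    refine ⟨1, one_pos, fun q hq P hP => ?_⟩
    have h := S_linear q hq P hP
    have hs : (q : ℝ) ^ ((2 ^ (0:ℕ) : ℝ) - 2⁻¹ + ((0:ℕ) : ℝ) / (j : ℝ)) = Real.sqrt q := by
      rw [show ((2 ^ (0:ℕ) : ℝ) - 2⁻¹ + ((0:ℕ) : ℝ) / (j : ℝ)) = (1/2 : ℝ) by norm_num]
      rw [← Real.sqrt_eq_rpow]
    rw [show (2:ℕ) ^ 0 = 1 from rfl, pow_one, hs, one_mul]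
    exact h
  | succ k ih =>
    obtain ⟨C, hC, hCle⟩ := ih
    refine ⟨C * (2 * ((k:ℝ) + 2) * T), by positivity, fun q hq P hP => ?_⟩
    haveI : NeZero q := ⟨hq.ne'⟩
    set Q : ℝ := (q : ℝ) with hQdef
    have hQ : 0 < Q := by rw [hQdef]; exact_mod_cast hq
    set c : ℤ := P.coeff (k + 2) with hcdef
    set G : ℝ := Real.sqrt (Int.gcd c q) with hGdef
    have hG0 : 0 ≤ G := Real.sqrt_nonneg _
    set Ek : ℝ := (2 ^ k : ℝ) - 2⁻¹ + (k : ℝ) / (j : ℝ) with hEkdef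
    have hQEk : 0 ≤ Q ^ Ek := Real.rpow_nonneg hQ.le _
    -- per-h bound
    have per_h : ∀ h : ZMod q, ‖S q (delta (h.val : ℤ) P)‖ ^ (2 ^ k)
        ≤ C * Q ^ Ek * (((k:ℝ) + 2) * Real.sqrt (Nat.gcd (c.natAbs * h.val) q)) := by
      intro h
      have hdeg : (delta (h.val : ℤ) P).natDegree ≤ k + 1 := delta_natDegree_le P _ (k+1) hP
      have hbound := hCle q hq _ hdeg
      have hcoeff : (delta (h.val : ℤ) P).coeff (k+1) = (k + 2 : ℤ) * (h.val : ℤ) * c := by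
        have := delta_coeff_top P (h.val : ℤ) (k+1) hP
        rw [this]
        push_cast
        ring
      have hgcd : Real.sqrt (Int.gcd ((delta (h.val : ℤ) P).coeff (k+1)) q)
          ≤ Real.sqrt ((k + 2 : ℝ)) * Real.sqrt (Nat.gcd (c.natAbs * h.val) q) := by
        rw [hcoeff]
        rw [← Real.sqrt_mul (by positivity)]
        apply Real.sqrt_le_sqrt
        have hnat : Int.gcd ((k + 2 : ℤ) * (h.val : ℤ) * c) (q:ℤ)
            = Nat.gcd ((k+2) * (h.val * c.natAbs)) q := by
          rw [int_gcd_natAbs]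
          congr 1
          rw [mul_assoc, Int.natAbs_mul, Int.natAbs_mul]
          have e1 : ((k:ℤ) + 2).natAbs = k + 2 := by omega
          have e2 : ((h.val : ℤ)).natAbs = h.val := Int.natAbs_natCast _
          rw [e1, e2]
        rw [hnat]
        have hle := nat_gcd_mul_le (k+2) (h.val * c.natAbs) q (by omega)
        have : ((Nat.gcd ((k+2) * (h.val * c.natAbs)) q : ℕ) : ℝ)
            ≤ ((k+2) * Nat.gcd (h.val * c.natAbs) q : ℕ) := by exact_mod_cast hle
        refine this.trans ?_
        rw [Nat.mul_comm h.val c.natAbs]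
        push_cast
        ring_nf
        exact le_refl _
      calc ‖S q (delta (h.val : ℤ) P)‖ ^ (2 ^ k)
          ≤ C * Q ^ Ek * Real.sqrt (Int.gcd ((delta (h.val : ℤ) P).coeff (k+1)) q) := hbound
        _ ≤ C * Q ^ Ek * (Real.sqrt ((k + 2 : ℝ)) * Real.sqrt (Nat.gcd (c.natAbs * h.val) q)) := by
            apply mul_le_mul_of_nonneg_left hgcd (by positivity)
        _ ≤ C * Q ^ Ek * (((k:ℝ) + 2) * Real.sqrt (Nat.gcd (c.natAbs * h.val) q)) := by
            apply mul_le_mul_of_nonneg_left ?_ (by positivity)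
            apply mul_le_mul_of_nonneg_right ?_ (Real.sqrt_nonneg _)
            have hb : Real.sqrt ((k:ℝ)+2) ≤ Real.sqrt (((k:ℝ)+2)^2) :=
              Real.sqrt_le_sqrt (by nlinarith [sq_nonneg ((k:ℝ)+1)])
            simpa [Real.sqrt_sq (by positivity : (0:ℝ) ≤ (k:ℝ)+2)] using hb
    -- sum over h
    have hsum : ∑ h : ZMod q, Real.sqrt (Nat.gcd (c.natAbs * h.val) q)
        ≤ 2 * Q * (T * Q ^ ((j:ℝ)⁻¹)) * G := by
      have h1 : ∑ h : ZMod q, Real.sqrt (Nat.gcd (c.natAbs * h.val) q)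
          = ∑ r ∈ Finset.range q, Real.sqrt (Nat.gcd (c.natAbs * r) q) :=
        sum_val' q (fun r => Real.sqrt (Nat.gcd (c.natAbs * r) q))
      rw [h1]
      have h2 := sum_sqrt_gcd q c.natAbs hq
      have h3 : Real.sqrt (Nat.gcd c.natAbs q) = G := by rw [hGdef, int_gcd_natAbs]
      rw [h3] at h2
      refine h2.trans ?_
      have h4 : (q.divisors.card : ℝ) ≤ T * Q ^ ((j:ℝ)⁻¹) := hTle q hq
      have : 2 * Q * (q.divisors.card : ℝ) ≤ 2 * Q * (T * Q ^ ((j:ℝ)⁻¹)) := by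
        apply mul_le_mul_of_nonneg_left h4 (by positivity)
      apply mul_le_mul_of_nonneg_right this hG0
    -- power mean
    have hpm : (∑ h : ZMod q, ‖S q (delta (h.val : ℤ) P)‖) ^ (2 ^ k)
        ≤ Q ^ (2 ^ k - 1 : ℕ) * ∑ h : ZMod q, ‖S q (delta (h.val : ℤ) P)‖ ^ (2 ^ k) := by
      have := pow_sum_le_card_mul_sum_pow
        (s := (Finset.univ : Finset (ZMod q)))
        (f := fun h => ‖S q (delta (h.val : ℤ) P)‖) (fun _ _ => norm_nonneg _) (2 ^ k - 1)
      have hn : 2 ^ k - 1 + 1 = 2 ^ k := Nat.sub_add_cancel Nat.one_le_two_pow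
      rw [hn] at this
      have hcard : ((Finset.univ : Finset (ZMod q)).card : ℝ) = Q := by
        rw [Finset.card_univ, ZMod.card]
      rw [hcard] at this
      exact this
    calc ‖S q P‖ ^ (2 ^ (k+1))
        = (‖S q P‖ ^ 2) ^ (2 ^ k) := by rw [← pow_mul, pow_succ, Nat.mul_comm]
      _ ≤ (∑ h : ZMod q, ‖S q (delta (h.val : ℤ) P)‖) ^ (2 ^ k) := by
          apply pow_le_pow_left₀ (sq_nonneg _) (weyl_sq q P)
      _ ≤ Q ^ (2 ^ k - 1 : ℕ) * ∑ h : ZMod q, ‖S q (delta (h.val : ℤ) P)‖ ^ (2 ^ k) := hpm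
      _ ≤ Q ^ (2 ^ k - 1 : ℕ) * ∑ h : ZMod q,
            C * Q ^ Ek * (((k:ℝ) + 2) * Real.sqrt (Nat.gcd (c.natAbs * h.val) q)) := by
          apply mul_le_mul_of_nonneg_left (Finset.sum_le_sum fun h _ => per_h h) (by positivity)
      _ = Q ^ (2 ^ k - 1 : ℕ) * (C * Q ^ Ek * ((k:ℝ) + 2)
            * ∑ h : ZMod q, Real.sqrt (Nat.gcd (c.natAbs * h.val) q)) := by
          congr 1
          rw [Finset.mul_sum]
          exact Finset.sum_congr rfl fun h _ => by ring
      _ ≤ Q ^ (2 ^ k - 1 : ℕ) * (C * Q ^ Ek * ((k:ℝ) + 2)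
            * (2 * Q * (T * Q ^ ((j:ℝ)⁻¹)) * G)) := by
          apply mul_le_mul_of_nonneg_left ?_ (by positivity)
          apply mul_le_mul_of_nonneg_left hsum (by positivity)
      _ = (C * (2 * ((k:ℝ) + 2) * T)) *
            ((Q ^ (2 ^ k - 1 : ℕ)) * Q ^ Ek * (Q * Q ^ ((j:ℝ)⁻¹))) * G := by ring
      _ = C * (2 * ((k:ℝ) + 2) * T) * Q ^ ((2 ^ (k+1) : ℝ) - 2⁻¹ + ((k:ℝ) + 1) / (j : ℝ)) * G := by
          rw [rpow_collect Q hQ k j]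
      _ = C * (2 * ((k:ℝ) + 2) * T)
            * (q:ℝ) ^ ((2 ^ (k+1) : ℝ) - 2⁻¹ + (((k+1):ℕ) : ℝ) / (j : ℝ)) * G := by
          rw [hQdef]
          push_cast
          ring_nf

-- === from t10.lean ===



lemma card_divisors_rpow (j : ℕ) (hj : 1 ≤ j) :
    ∃ T : ℝ, 0 < T ∧ ∀ q : ℕ, 0 < q → (q.divisors.card : ℝ) ≤ T * (q : ℝ) ^ ((j:ℝ)⁻¹) := by
  set D : ℕ := (j ^ j) ^ (2 ^ j) with hD
  have hD1 : 1 ≤ D := Nat.one_le_pow _ _ (Nat.pow_pos (by omega : 0 < j))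
  have hjR : ((j:ℝ)) ≠ 0 := Nat.cast_ne_zero.mpr (by omega)
  refine ⟨(D : ℝ), by exact_mod_cast Nat.lt_of_lt_of_le Nat.zero_lt_one hD1, fun q hq => ?_⟩
  have hDq : ((q.divisors.card : ℝ)) ^ (j : ℕ) ≤ (D : ℝ) * q := by
    exact_mod_cast card_divisors_pow_le j hj q hq.ne'
  have hτ : (q.divisors.card : ℝ) = (((q.divisors.card : ℝ)) ^ (j:ℕ)) ^ ((j:ℝ)⁻¹) := by
    rw [← Real.rpow_natCast ((q.divisors.card : ℝ)) j, ← Real.rpow_mul (by positivity),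
      mul_inv_cancel₀ hjR, Real.rpow_one]
  calc (q.divisors.card : ℝ) = (((q.divisors.card : ℝ)) ^ (j:ℕ)) ^ ((j:ℝ)⁻¹) := hτ
    _ ≤ ((D : ℝ) * q) ^ ((j:ℝ)⁻¹) := Real.rpow_le_rpow (pow_nonneg (Nat.cast_nonneg _) _) hDq (by positivity)
    _ = (D : ℝ) ^ ((j:ℝ)⁻¹) * (q:ℝ) ^ ((j:ℝ)⁻¹) := Real.mul_rpow (by positivity) (by positivity)
    _ ≤ (D : ℝ) * (q:ℝ) ^ ((j:ℝ)⁻¹) := by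
        apply mul_le_mul_of_nonneg_right ?_ (by positivity)
        have h1 : (D : ℝ) ^ ((j:ℝ)⁻¹) ≤ (D : ℝ) ^ (1:ℝ) := by
          apply Real.rpow_le_rpow_of_exponent_le (by exact_mod_cast hD1)
          rw [inv_le_one_iff₀]
          right
          exact_mod_cast hj
        rwa [Real.rpow_one] at h1

lemma S_eq_Icc (q : ℕ) (hq : 0 < q) (a : ℤ) (d : ℕ) (hd : 1 ≤ d) :
    ∑ r ∈ Finset.Icc 1 q,
        Complex.exp (2 * Real.pi * Complex.I * (a : ℂ) * (r : ℂ) ^ d / (q : ℂ))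
      = S q (Polynomial.C a * X ^ d) := by
  have hterm : ∀ r : ℕ, ec q ((Polynomial.C a * X ^ d).eval (r : ℤ))
      = Complex.exp (2 * Real.pi * Complex.I * (a : ℂ) * (r : ℂ) ^ d / (q : ℂ)) := by
    intro r
    rw [eval_mul, eval_C, eval_pow, eval_X, ec]
    congr 1
    push_cast
    ring
  have hf0 : Complex.exp (2 * Real.pi * Complex.I * (a : ℂ) * ((0:ℕ) : ℂ) ^ d / (q : ℂ)) = 1 := by
    rw [Nat.cast_zero, zero_pow (by omega : d ≠ 0)]
    simp
  have hfq : Complex.exp (2 * Real.pi * Complex.I * (a : ℂ) * ((q:ℕ) : ℂ) ^ d / (q : ℂ)) = 1 := by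
    have hqC : ((q:ℕ) : ℂ) ≠ 0 := Nat.cast_ne_zero.mpr hq.ne'
    have harg : 2 * (Real.pi:ℂ) * Complex.I * (a : ℂ) * ((q:ℕ) : ℂ) ^ d / (q : ℂ)
        = ((a * (q:ℤ) ^ (d-1) : ℤ) : ℂ) * (2 * Real.pi * Complex.I) := by
      have hqd : ((q:ℕ) : ℂ) ^ d = ((q:ℕ) : ℂ) ^ (d - 1) * ((q:ℕ) : ℂ) := by
        rw [← pow_succ]
        congr 1
        omega
      rw [hqd]
      push_cast
      field_simp
    rw [harg, Complex.exp_int_mul_two_pi_mul_I]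
  set f : ℕ → ℂ := fun r =>
    Complex.exp (2 * Real.pi * Complex.I * (a : ℂ) * (r : ℂ) ^ d / (q : ℂ)) with hfdef
  have h1 : ∑ r ∈ Finset.Icc 1 q, f r = (∑ r ∈ Finset.Ico 1 q, f r) + f q := by
    rw [← Finset.Ico_add_one_right_eq_Icc]
    rw [Finset.sum_Ico_succ_top hq]
  have h2 : S q (Polynomial.C a * X ^ d) = f 0 + ∑ r ∈ Finset.Ico 1 q, f r := by
    rw [S]
    rw [Finset.sum_congr rfl fun r _ => hterm r]
    rw [Finset.range_eq_Ico, Finset.sum_eq_sum_Ico_succ_bot hq]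
  rw [h1, h2, hfdef]
  simp only []
  rw [hf0, hfq]
  ring

-- === from t11.lean ===




end GaussWeyl
end

/-- Gauss–Weyl sum estimate: for `d ≥ 2` there are `δ > 0` and `C > 0`, depending only
on `d`, such that `|q⁻¹ Σ_{r=1}^q e((a/q) r^d)| ≤ C q^{-δ}` whenever `q ≥ 2` and
`gcd(a,q) = 1`. -/
theorem gauss_sum_estimate (d : ℕ) (hd : 2 ≤ d) :
    ∃ δ > (0:ℝ), ∃ C > (0:ℝ), ∀ q : ℕ, 2 ≤ q → ∀ a : ℤ, Int.gcd a q = 1 →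
      ‖(q : ℂ)⁻¹ * ∑ r ∈ Finset.Icc 1 q,
          Complex.exp (2 * Real.pi * Complex.I * (a : ℂ) * (r : ℂ) ^ d / (q : ℂ))‖ ≤
        C * (q : ℝ) ^ (-δ) := by
  classical
  set j : ℕ := 4 * d with hjdef
  have hj : 1 ≤ j := by omega
  obtain ⟨T, hT, hTle⟩ := GaussWeyl.card_divisors_rpow j hj
  set k : ℕ := d - 1 with hkdef
  obtain ⟨C₀, hC₀, hC₀le⟩ := GaussWeyl.claim j hj T hT hTle k
  set K : ℕ := 2 ^ k with hKdef
  have hK1 : 1 ≤ K := Nat.one_le_two_pow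
  have hKR : (0:ℝ) < (K:ℝ) := by exact_mod_cast hK1
  refine ⟨4⁻¹ * (K:ℝ)⁻¹, by positivity, C₀ ^ ((K:ℝ)⁻¹), Real.rpow_pos_of_pos hC₀ _, ?_⟩
  intro q hq a ha
  have hq0 : 0 < q := by omega
  have hq1R : (1:ℝ) ≤ q := by exact_mod_cast hq0
  set P : Polynomial ℤ := Polynomial.C a * X ^ d with hPdef
  have hdeg : P.natDegree ≤ k + 1 := by
    have h1 : P.natDegree ≤ (X ^ d : Polynomial ℤ).natDegree := Polynomial.natDegree_C_mul_le _ _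
    rw [Polynomial.natDegree_X_pow] at h1
    omega
  have hcoeff : P.coeff (k + 1) = a := by
    have hk1 : k + 1 = d := by omega
    rw [hPdef, hk1, Polynomial.coeff_C_mul, Polynomial.coeff_X_pow, if_pos rfl, mul_one]
  have hmain := hC₀le q hq0 P hdeg
  rw [hcoeff, ha] at hmain
  simp only [Nat.cast_one, Real.sqrt_one, mul_one] at hmain
  -- exponent bound
  have hexp : ((2:ℝ) ^ k - 2⁻¹ + (k : ℝ) / (j : ℝ)) ≤ (K:ℝ) - 4⁻¹ := by
    have hKcast : ((K:ℕ):ℝ) = (2:ℝ) ^ k := by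
      rw [hKdef]; push_cast; ring
    rw [hKcast]
    have h1 : (k : ℝ) / (j : ℝ) ≤ 4⁻¹ := by
      rw [hjdef]
      rw [div_le_iff₀ (by positivity : (0:ℝ) < ((4 * d : ℕ):ℝ))]
      have : ((k:ℕ):ℝ) ≤ d := by exact_mod_cast (by omega : k ≤ d)
      push_cast
      linarith
    linarith
  have hmain2 : ‖GaussWeyl.S q P‖ ^ K ≤ C₀ * (q:ℝ) ^ ((K:ℝ) - 4⁻¹) := by
    refine hmain.trans ?_
    apply mul_le_mul_of_nonneg_left ?_ hC₀.le
    exact Real.rpow_le_rpow_of_exponent_le hq1R hexp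
  -- take K-th root
  have hSnn : (0:ℝ) ≤ ‖GaussWeyl.S q P‖ := norm_nonneg _
  have hroot : ‖GaussWeyl.S q P‖ ≤ C₀ ^ ((K:ℝ)⁻¹) * (q:ℝ) ^ (((K:ℝ) - 4⁻¹) * (K:ℝ)⁻¹) := by
    have h3 : ‖GaussWeyl.S q P‖ = ((‖GaussWeyl.S q P‖ ^ (K:ℕ))) ^ ((K:ℝ)⁻¹) := by
      rw [← Real.rpow_natCast (‖GaussWeyl.S q P‖) K, ← Real.rpow_mul hSnn,
        mul_inv_cancel₀ hKR.ne', Real.rpow_one]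
    rw [h3]
    calc ((‖GaussWeyl.S q P‖ ^ (K:ℕ))) ^ ((K:ℝ)⁻¹)
        ≤ (C₀ * (q:ℝ) ^ ((K:ℝ) - 4⁻¹)) ^ ((K:ℝ)⁻¹) :=
          Real.rpow_le_rpow (by positivity) hmain2 (by positivity)
      _ = C₀ ^ ((K:ℝ)⁻¹) * ((q:ℝ) ^ ((K:ℝ) - 4⁻¹)) ^ ((K:ℝ)⁻¹) :=
          Real.mul_rpow hC₀.le (by positivity)
      _ = C₀ ^ ((K:ℝ)⁻¹) * (q:ℝ) ^ (((K:ℝ) - 4⁻¹) * (K:ℝ)⁻¹) := by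
          rw [← Real.rpow_mul (by positivity)]
  have hexp2 : ((K:ℝ) - 4⁻¹) * (K:ℝ)⁻¹ = 1 - 4⁻¹ * (K:ℝ)⁻¹ := by
    field_simp
  rw [hexp2] at hroot
  -- assemble
  rw [GaussWeyl.S_eq_Icc q hq0 a d (by omega)]
  rw [norm_mul, norm_inv, Complex.norm_natCast]
  have hfinal : (q:ℝ)⁻¹ * ‖GaussWeyl.S q P‖
      ≤ C₀ ^ ((K:ℝ)⁻¹) * (q:ℝ) ^ (-(4⁻¹ * (K:ℝ)⁻¹)) := by
    have h5 : (q:ℝ)⁻¹ * ‖GaussWeyl.S q P‖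
        ≤ (q:ℝ)⁻¹ * (C₀ ^ ((K:ℝ)⁻¹) * (q:ℝ) ^ (1 - 4⁻¹ * (K:ℝ)⁻¹)) := by
      apply mul_le_mul_of_nonneg_left hroot (by positivity)
    refine h5.trans_eq ?_
    rw [show (q:ℝ)⁻¹ = (q:ℝ) ^ (-1 : ℝ) from (Real.rpow_neg_one _).symm]
    rw [← mul_assoc, mul_comm ((q:ℝ) ^ (-1:ℝ)) _, mul_assoc, ← Real.rpow_add (by positivity)]
    congr 1
    ring
  exact hfinal
end
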